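/- arXiv:2511.12679 — 7 statements merged into one kernel-verified Lean document; each statement's English description precedes it below -/
import Mathlib

section
/- There exists an approach region ending at the boundary point w = 1 of the unit disc that is attached at w but not curvilinear at w. For example, A = (0,1) ∪ ⋃_{n≥2} {(1 − 1/n)·e^{iθ} : 0 ≤ θ < 1/n} is attached at 1, but for every r > 0 the set (A ∪ {1}) ∩ closure(B(1,r)) is not compact, which rules out A being curvilinear at 1. -/
open Metric Set Filter

noncomputable section

def unitDisc : Set ℂ := {z | ‖z‖ < 1}

/-- `A` and `S` have the same germ at `w`. -/
def SameGerm (w : ℂ) (A S : Set ℂ) : Prop :=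
  ∃ r > 0, A ∩ ball w r = S ∩ ball w r

/-- `A` is attached at `w`. -/
def Attached (w : ℂ) (A : Set ℂ) : Prop :=
  ∃ S : Set ℂ, S ⊆ unitDisc ∧ IsConnected (insert w S) ∧ SameGerm w A S

/-- `A` is curvilinear at `w`. -/
def Curvilinear (w : ℂ) (A : Set ℂ) : Prop :=
  ∃ φ : ℝ → ℂ, ContinuousOn φ (Ico 0 1) ∧ (∀ s ∈ Ico (0:ℝ) 1, φ s ∈ unitDisc) ∧
    Tendsto φ (nhdsWithin 1 (Ico (0:ℝ) 1)) (nhds w) ∧ SameGerm w A (φ '' Ico 0 1)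

/-- The example region: the radius `(0,1)` together with the circular arcs
`{(1 − 1/n)·e^{iθ} : 0 ≤ θ < 1/n}` for `n ≥ 2`. -/
def A6 : Set ℂ :=
  ((fun x : ℝ => (x : ℂ)) '' Ioo 0 1) ∪
    ⋃ n : ℕ, ⋃ (_ : 2 ≤ n),
      (fun θ : ℝ => ((1 - 1/(n:ℝ) : ℝ) : ℂ) * Complex.exp (θ * Complex.I)) '' Ico 0 (1/(n:ℝ))

lemma abs_mul_expI (a θ : ℝ) :
    ‖(a:ℂ) * Complex.exp ((θ:ℂ) * Complex.I)‖ = |a| := by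
  rw [norm_mul, Complex.norm_exp, Complex.norm_real]
  simp [Complex.mul_re]

lemma expI_inj {θ₁ θ₂ : ℝ} (h1 : θ₁ ∈ Icc (0:ℝ) 1) (h2 : θ₂ ∈ Icc (0:ℝ) 1)
    (h : Complex.exp ((θ₁:ℂ) * Complex.I) = Complex.exp ((θ₂:ℂ) * Complex.I)) : θ₁ = θ₂ := by
  rw [Complex.exp_eq_exp_iff_exists_int] at h
  obtain ⟨k, hk⟩ := h
  have him : θ₁ = θ₂ + (k:ℝ) * (2 * Real.pi) := by
    have := congrArg Complex.im hk
    simpa using this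
  have hk0 : k = 0 := by
    by_contra h0
    have h1le : (1:ℝ) ≤ |(k:ℝ)| := by
      have : (1:ℤ) ≤ |k| := Int.one_le_abs h0
      calc (1:ℝ) = ((1:ℤ):ℝ) := by norm_num
        _ ≤ ((|k|:ℤ):ℝ) := by exact_mod_cast this
        _ = |(k:ℝ)| := by push_cast; ring
    have hpi : (2:ℝ) * Real.pi ≤ |(k:ℝ)| * (2 * Real.pi) :=
      le_mul_of_one_le_left (by positivity) h1le
    have habs : |(k:ℝ)| * (2 * Real.pi) = |θ₁ - θ₂| := by
      rw [him, add_sub_cancel_left]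
      rw [abs_mul, abs_of_pos (by positivity : (0:ℝ) < 2 * Real.pi)]
    have hbd : |θ₁ - θ₂| ≤ 1 := by
      rw [abs_sub_le_iff]
      constructor <;> [linarith [h1.1, h1.2, h2.1, h2.2]; linarith [h1.1, h1.2, h2.1, h2.2]]
    have := Real.pi_gt_three
    linarith [habs ▸ hpi]
  rw [hk0] at him
  simpa using him

lemma arc_mem_A6 {n : ℕ} (hn : 2 ≤ n) {θ : ℝ} (hθ : θ ∈ Ico 0 (1/(n:ℝ))) :
    ((1 - 1/(n:ℝ) : ℝ) : ℂ) * Complex.exp ((θ:ℂ) * Complex.I) ∈ A6 :=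
  Or.inr (mem_iUnion.2 ⟨n, mem_iUnion.2 ⟨hn, mem_image_of_mem _ hθ⟩⟩)

lemma one_div_le_half {n : ℕ} (hn : 2 ≤ n) : 1/(n:ℝ) ≤ 1/2 := by
  have : (2:ℝ) ≤ (n:ℝ) := by exact_mod_cast hn
  apply one_div_le_one_div_of_le <;> linarith

lemma n_cast_pos {n : ℕ} (hn : 2 ≤ n) : (0:ℝ) < (n:ℝ) := by
  have : (2:ℝ) ≤ (n:ℝ) := by exact_mod_cast hn
  linarith

lemma A6_subset_unitDisc : A6 ⊆ unitDisc := by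
  rintro z (⟨x, hx, rfl⟩ | hz)
  · simp only [unitDisc, mem_setOf_eq, Complex.norm_real, Real.norm_eq_abs]
    rw [abs_of_pos hx.1]; exact hx.2
  · simp only [mem_iUnion] at hz
    obtain ⟨n, hn, θ, hθ, rfl⟩ := hz
    have h1 : 1/(n:ℝ) ≤ 1/2 := one_div_le_half hn
    have h0 : 0 < 1/(n:ℝ) := by
      have : (0:ℝ) < (n:ℝ) := n_cast_pos hn
      positivity
    simp only [unitDisc, mem_setOf_eq]
    rw [abs_mul_expI, abs_of_pos (by linarith)]
    linarith

/-- The point `(1-1/n) e^{i/n}` is not in `A6`. -/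
lemma limit_point_not_mem {n : ℕ} (hn : 2 ≤ n) :
    ((1 - 1/(n:ℝ) : ℝ) : ℂ) * Complex.exp (((1/(n:ℝ):ℝ):ℂ) * Complex.I) ∉ A6 := by
  have h1 : 1/(n:ℝ) ≤ 1/2 := one_div_le_half hn
  have h0 : 0 < 1/(n:ℝ) := by
    have : (0:ℝ) < (n:ℝ) := n_cast_pos hn
    positivity
  have ha : (0:ℝ) < 1 - 1/(n:ℝ) := by linarith
  have hane : ((1 - 1/(n:ℝ) : ℝ) : ℂ) ≠ 0 := by
    exact_mod_cast ne_of_gt ha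
  rintro (⟨x, hx, hxe⟩ | hz)
  · -- z on the radius
    have habs := congrArg norm hxe
    rw [Complex.norm_real, Real.norm_eq_abs, abs_of_pos hx.1, abs_mul_expI, abs_of_pos ha] at habs
    rw [← habs] at hxe
    have : Complex.exp (((1/(n:ℝ):ℝ):ℂ) * Complex.I) = Complex.exp (((0:ℝ):ℂ) * Complex.I) := by
      have := mul_left_cancel₀ hane (by simpa [habs] using hxe.symm : 
        ((1 - 1/(n:ℝ) : ℝ) : ℂ) * Complex.exp (((1/(n:ℝ):ℝ):ℂ) * Complex.I) 
          = ((1 - 1/(n:ℝ) : ℝ) : ℂ) * 1)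
      simpa using this
    have := expI_inj ⟨le_of_lt h0, by linarith⟩ ⟨le_refl 0, by norm_num⟩ this
    linarith
  · -- z on an arc
    simp only [mem_iUnion] at hz
    obtain ⟨m, hm, θ, hθ, hte⟩ := hz
    have hm1 : 1/(m:ℝ) ≤ 1/2 := one_div_le_half hm
    have hm0 : 0 < 1/(m:ℝ) := by
      have : (0:ℝ) < (m:ℝ) := n_cast_pos hm
      positivity
    have hb : (0:ℝ) < 1 - 1/(m:ℝ) := by linarith
    -- moduli equal
    have habs := congrArg norm hte
    rw [abs_mul_expI, abs_mul_expI, abs_of_pos hb, abs_of_pos ha] at habs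
    have hmn : 1/(m:ℝ) = 1/(n:ℝ) := by linarith
    have hexp : Complex.exp ((θ:ℂ) * Complex.I) 
        = Complex.exp (((1/(n:ℝ):ℝ):ℂ) * Complex.I) := by
      apply mul_left_cancel₀ hane
      rw [← hte]
      norm_cast
      rw [habs]
    have := expI_inj ⟨hθ.1, by linarith [hθ.2, hm1]⟩ ⟨le_of_lt h0, by linarith⟩ hexp
    rw [this, hmn] at hθ
    exact lt_irrefl _ hθ.2

/-- Points of the n-th arc (closed version) are within `3/n` of 1. -/
lemma arc_dist_bound {n : ℕ} (hn : 2 ≤ n) {θ : ℝ} (hθ : θ ∈ Icc 0 (1/(n:ℝ))) :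
    ‖((1 - 1/(n:ℝ) : ℝ) : ℂ) * Complex.exp ((θ:ℂ) * Complex.I) - 1‖ ≤ 3/(n:ℝ) := by
  obtain ⟨hθ1, hθ2⟩ := hθ
  have h1 : 1/(n:ℝ) ≤ 1/2 := one_div_le_half hn
  have h0 : 0 < 1/(n:ℝ) := by
    have : (0:ℝ) < (n:ℝ) := n_cast_pos hn
    positivity
  set a : ℝ := 1 - 1/(n:ℝ) with ha_def
  have ha : (0:ℝ) < a := by simp only [ha_def]; linarith
  have ha1 : a ≤ 1 := by simp only [ha_def]; linarith
  have key : ((a:ℝ):ℂ) * Complex.exp ((θ:ℂ) * Complex.I) - 1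
      = ((a:ℝ):ℂ) * (Complex.exp ((θ:ℂ) * Complex.I) - 1) + (((a:ℝ):ℂ) - 1) := by ring
  rw [key]
  have hIabs : ‖(θ:ℂ) * Complex.I‖ = θ := by
    rw [norm_mul, Complex.norm_I, Complex.norm_real, mul_one, Real.norm_eq_abs, abs_of_nonneg hθ1]
  have hexp : ‖Complex.exp ((θ:ℂ) * Complex.I) - 1‖ ≤ 2 * θ := by
    have := Complex.norm_exp_sub_one_le (x := (θ:ℂ) * Complex.I) (by rw [hIabs]; linarith [hθ2])
    rwa [hIabs] at this
  calc ‖((a:ℝ):ℂ) * (Complex.exp ((θ:ℂ) * Complex.I) - 1) + (((a:ℝ):ℂ) - 1)‖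
      ≤ ‖((a:ℝ):ℂ) * (Complex.exp ((θ:ℂ) * Complex.I) - 1)‖ 
        + ‖((a:ℝ):ℂ) - 1‖ := norm_add_le _ _
    _ = |a| * ‖Complex.exp ((θ:ℂ) * Complex.I) - 1‖ + |a - 1| := by
        rw [norm_mul, Complex.norm_real, Real.norm_eq_abs]
        congr 1
        rw [show ((a:ℝ):ℂ) - 1 = ((a - 1 : ℝ):ℂ) by push_cast; ring, Complex.norm_real, Real.norm_eq_abs]
    _ ≤ 1 * (2 * θ) + 1/(n:ℝ) := by
        apply add_le_add
        · apply mul_le_mul (by rw [abs_of_pos ha]; exact ha1) hexp (by positivity) zero_le_one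
        · rw [abs_of_nonpos (by linarith)]; simp only [ha_def]; ring_nf; exact le_refl _
    _ ≤ 3/(n:ℝ) := by
        have h3n : 3/(n:ℝ) = 2*(1/(n:ℝ)) + 1/(n:ℝ) := by ring
        rw [one_mul]; linarith [hθ2]

/-- Non-compactness, part 4. -/
lemma not_compact_A6 : ∀ r > 0, ¬ IsCompact (insert (1:ℂ) A6 ∩ closure (ball (1:ℂ) r)) := by
  intro r hr hc
  set n : ℕ := max 2 (⌈3/r⌉₊ + 1) with hn_def
  have hn2 : 2 ≤ n := le_max_left _ _
  have hnr : 3/(n:ℝ) < r := by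
    have h1 : (⌈3/r⌉₊ + 1 : ℕ) ≤ n := le_max_right _ _
    have h2 : (3/r : ℝ) ≤ (⌈3/r⌉₊ : ℝ) := Nat.le_ceil _
    have h3 : (3/r : ℝ) < (n:ℝ) := by
      calc (3/r : ℝ) ≤ (⌈3/r⌉₊ : ℝ) := h2
        _ < (⌈3/r⌉₊ : ℝ) + 1 := by linarith
        _ = ((⌈3/r⌉₊ + 1 : ℕ) : ℝ) := by push_cast; ring
        _ ≤ (n:ℝ) := by exact_mod_cast h1
    have hn0 : (0:ℝ) < (n:ℝ) := lt_trans (by positivity) h3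
    rw [div_lt_iff₀ hn0]
    rw [div_lt_iff₀ hr] at h3
    linarith
  have h0 : 0 < 1/(n:ℝ) := by
    have : (0:ℝ) < (n:ℝ) := n_cast_pos hn2
    positivity
  set g : ℝ → ℂ := fun θ => ((1 - 1/(n:ℝ) : ℝ) : ℂ) * Complex.exp ((θ:ℂ) * Complex.I) with hg_def
  have hgc : Continuous g := by
    apply Continuous.mul continuous_const
    exact Complex.continuous_exp.comp ((Complex.continuous_ofReal).mul continuous_const)
  set S : Set ℂ := insert (1:ℂ) A6 ∩ closure (ball (1:ℂ) r) with hS_def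
  have harc_sub : g '' Ico 0 (1/(n:ℝ)) ⊆ S := by
    rintro z ⟨θ, hθ, rfl⟩
    constructor
    · exact mem_insert_of_mem _ (arc_mem_A6 hn2 hθ)
    · apply subset_closure
      rw [mem_ball, Complex.dist_eq]
      exact lt_of_le_of_lt (arc_dist_bound hn2 ⟨hθ.1, le_of_lt hθ.2⟩) hnr
  have hz_closure : g (1/(n:ℝ)) ∈ closure (g '' Ico 0 (1/(n:ℝ))) := by
    apply image_closure_subset_closure_image hgc
    exact mem_image_of_mem _ (by rw [closure_Ico (ne_of_lt h0)]; exact ⟨le_of_lt h0, le_refl _⟩)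
  have hz_S : g (1/(n:ℝ)) ∈ S := by
    have hSc : IsClosed S := hc.isClosed
    have := closure_mono harc_sub hz_closure
    rwa [hSc.closure_eq] at this
  have hz_ne : g (1/(n:ℝ)) ≠ 1 := by
    intro h
    have := congrArg norm h
    rw [hg_def] at this
    simp only [abs_mul_expI] at this
    rw [abs_of_pos (by linarith [one_div_le_half hn2] : (0:ℝ) < 1 - 1/(n:ℝ))] at this
    simp at this
    linarith
  rcases hz_S.1 with h | h
  · exact hz_ne h
  · exact limit_point_not_mem hn2 h

theorem stmt6 :
    A6 ⊆ unitDisc ∧ (1:ℂ) ∈ closure A6 ∧ Attached 1 A6 ∧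
    (∀ r > 0, ¬ IsCompact (insert (1:ℂ) A6 ∩ closure (ball (1:ℂ) r))) ∧
    ¬ Curvilinear 1 A6 := by
  have h1 : A6 ⊆ unitDisc := A6_subset_unitDisc
  have h2 : (1:ℂ) ∈ closure A6 := by
    have : (1:ℂ) ∈ (fun x : ℝ => (x:ℂ)) '' closure (Ioo (0:ℝ) 1) := by
      refine ⟨1, ?_, by norm_num⟩
      rw [closure_Ioo (by norm_num : (0:ℝ) ≠ 1)]
      exact ⟨by norm_num, le_refl _⟩
    have h := image_closure_subset_closure_image Complex.continuous_ofReal this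
    exact closure_mono (subset_union_left) h
  have h3 : Attached 1 A6 := by
    refine ⟨A6, h1, ?_, ⟨1, one_pos, rfl⟩⟩
    have hL : IsPreconnected ((fun x : ℝ => (x : ℂ)) '' Ioo 0 1) :=
      (isPreconnected_Ioo).image _ (Complex.continuous_ofReal.continuousOn)
    have hhalf : ((1/2 : ℝ) : ℂ) ∈ (fun x : ℝ => (x : ℂ)) '' Ioo 0 1 :=
      ⟨1/2, by norm_num, rfl⟩
    have hpre : IsPreconnected A6 := by
      apply isPreconnected_of_forall (((1/2 : ℝ) : ℂ))
      rintro y (hy | hy)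
      · exact ⟨_, subset_union_left, hhalf, hy, hL⟩
      · simp only [mem_iUnion] at hy
        obtain ⟨m, hm, θ, hθ, rfl⟩ := hy
        set arc := (fun θ : ℝ => ((1 - 1/(m:ℝ) : ℝ) : ℂ) * Complex.exp ((θ:ℂ) * Complex.I)) 
          '' Ico 0 (1/(m:ℝ)) with harc_def
        have hm1 : 1/(m:ℝ) ≤ 1/2 := one_div_le_half hm
        have hm0 : 0 < 1/(m:ℝ) := by
          have : (0:ℝ) < (m:ℝ) := n_cast_pos hm
          positivity
        refine ⟨(fun x : ℝ => (x : ℂ)) '' Ioo 0 1 ∪ arc, ?_, Or.inl hhalf, 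
          Or.inr (mem_image_of_mem _ hθ), ?_⟩
        · apply union_subset subset_union_left
          intro z hz
          exact Or.inr (mem_iUnion.2 ⟨m, mem_iUnion.2 ⟨hm, hz⟩⟩)
        · apply IsPreconnected.union (((1 - 1/(m:ℝ) : ℝ) : ℂ))
          · exact ⟨1 - 1/(m:ℝ), ⟨by linarith, by linarith⟩, rfl⟩
          · refine ⟨0, ⟨le_refl _, hm0⟩, ?_⟩
            simp
          · exact hL
          · exact (isPreconnected_Ico).image _ (Continuous.continuousOn (by
              apply Continuous.mul continuous_const
              exact Complex.continuous_exp.comp ((Complex.continuous_ofReal).mul continuous_const)))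
    have hA6ne : A6.Nonempty := ⟨_, hhalf.elim fun x hx => Or.inl ⟨x, hx.1, hx.2⟩⟩
    constructor
    · exact ⟨1, mem_insert _ _⟩
    · apply hpre.subset_closure (subset_insert _ _)
      intro z hz
      rcases hz with rfl | hz
      · exact h2
      · exact subset_closure hz
  have h4 : ∀ r > 0, ¬ IsCompact (insert (1:ℂ) A6 ∩ closure (ball (1:ℂ) r)) := not_compact_A6
  refine ⟨h1, h2, h3, h4, ?_⟩
  rintro ⟨φ, hφc, hφD, hφt, r, hr, hgerm⟩
  -- build the extended path ψ
  set ψ : ℝ → ℂ := fun s => if s < 1 then φ s else 1 with hψ_def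
  have hψc : ContinuousOn ψ (Icc 0 1) := by
    intro s hs
    by_cases hlt : s < 1
    · have hmem : Iio (1:ℝ) ∈ nhds s := Iio_mem_nhds hlt
      rw [← continuousWithinAt_inter hmem, 
        (by ext x; simp [and_assoc, lt_iff_le_and_ne, Icc, Ico] : 
          Icc (0:ℝ) 1 ∩ Iio 1 = Ico 0 1)]
      exact (hφc s ⟨hs.1, hlt⟩).congr (fun x hx => if_pos hx.2) (if_pos hlt)
    · have hs1 : s = 1 := le_antisymm hs.2 (not_lt.mp hlt)
      subst hs1
      rw [ContinuousWithinAt]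
      rw [show ψ 1 = 1 from if_neg (lt_irrefl 1)]
      rw [show Icc (0:ℝ) 1 = Ico 0 1 ∪ {1} from (Ico_union_right (by norm_num)).symm]
      rw [nhdsWithin_union]
      rw [tendsto_sup]
      constructor
      · apply hφt.congr'
        filter_upwards [self_mem_nhdsWithin] with x hx
        exact (if_pos hx.2).symm
      · rw [nhdsWithin_singleton]
        have := tendsto_pure_nhds ψ 1
        rwa [show ψ 1 = 1 from if_neg (lt_irrefl 1)] at this
  have hK : IsCompact (ψ '' Icc 0 1) := (isCompact_Icc).image_of_continuousOn hψc
  apply h4 (r/2) (by linarith)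
  have hsub : closure (ball (1:ℂ) (r/2)) ⊆ ball (1:ℂ) r := by
    intro z hz
    have := closure_ball_subset_closedBall hz
    rw [mem_closedBall] at this
    rw [mem_ball]
    linarith
  have heq : insert (1:ℂ) A6 ∩ closure (ball (1:ℂ) (r/2)) 
      = (ψ '' Icc 0 1) ∩ closure (ball (1:ℂ) (r/2)) := by
    ext z
    constructor
    · rintro ⟨hz1, hz2⟩
      refine ⟨?_, hz2⟩
      rcases hz1 with rfl | hz1
      · exact ⟨1, ⟨by norm_num, le_refl _⟩, if_neg (lt_irrefl 1)⟩
      · have : z ∈ φ '' Ico 0 1 ∩ ball (1:ℂ) r := by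
          rw [← hgerm]; exact ⟨hz1, hsub hz2⟩
        obtain ⟨⟨s, hsm, rfl⟩, _⟩ := this
        exact ⟨s, ⟨hsm.1, le_of_lt hsm.2⟩, if_pos hsm.2⟩
    · rintro ⟨⟨s, hsm, rfl⟩, hz2⟩
      refine ⟨?_, hz2⟩
      by_cases hlt : s < 1
      · rw [show ψ s = φ s from if_pos hlt]
        have : φ s ∈ A6 ∩ ball (1:ℂ) r := by
          rw [hgerm]
          refine ⟨mem_image_of_mem _ ⟨hsm.1, hlt⟩, ?_⟩
          apply hsub
          rwa [show ψ s = φ s from if_pos hlt] at hz2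
        exact mem_insert_of_mem _ this.1
      · rw [show ψ s = 1 from if_neg hlt]
        exact mem_insert _ _
  rw [heq]
  exact hK.inter_right isClosed_closure
end
end

section
/- No approach region ending at a boundary point w of the unit disc can be both attached at w and end sequentially at w: the classes of attached and sequentially-ending approach regions at w are disjoint. -/
open Metric Set Filter

noncomputable section

def unitCircle : Set ℂ := {z | ‖z‖ = 1}

/-- `A` ends sequentially at `w`. -/
def SeqEnding (w : ℂ) (A : Set ℂ) : Prop :=
  ∃ φ : ℕ → ℂ, (∀ j, φ j ∈ unitDisc) ∧ Tendsto φ atTop (nhds w) ∧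
    SameGerm w A (Set.range φ)

theorem stmt7 (w : ℂ) (hw : w ∈ unitCircle) (A : Set ℂ)
    (hA : A ⊆ unitDisc) (hend : w ∈ closure A) :
    ¬ (Attached w A ∧ SeqEnding w A) := by
  rintro ⟨⟨S, hS_sub, hS_conn, r1, hr1, hgerm1⟩, φ, hφ_disc, hφ_tend, r2, hr2, hgerm2⟩
  set r := min r1 r2 with hr_def
  have hr : 0 < r := lt_min hr1 hr2
  -- S ∩ ball w r = range φ ∩ ball w r
  have hball : ball w r ⊆ ball w r1 := ball_subset_ball (min_le_left _ _)
  have hball2 : ball w r ⊆ ball w r2 := ball_subset_ball (min_le_right _ _)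
  have hSA : S ∩ ball w r = A ∩ ball w r := by
    ext z
    constructor
    · rintro ⟨hz, hzb⟩
      have : z ∈ S ∩ ball w r1 := ⟨hz, hball hzb⟩
      rw [← hgerm1] at this
      exact ⟨this.1, hzb⟩
    · rintro ⟨hz, hzb⟩
      have : z ∈ A ∩ ball w r1 := ⟨hz, hball hzb⟩
      rw [hgerm1] at this
      exact ⟨this.1, hzb⟩
  have hSφ : S ∩ ball w r = Set.range φ ∩ ball w r := by
    rw [hSA]
    ext z
    constructor
    · rintro ⟨hz, hzb⟩
      have : z ∈ A ∩ ball w r2 := ⟨hz, hball2 hzb⟩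
      rw [hgerm2] at this
      exact ⟨this.1, hzb⟩
    · rintro ⟨hz, hzb⟩
      have : z ∈ Set.range φ ∩ ball w r2 := ⟨hz, hball2 hzb⟩
      rw [← hgerm2] at this
      exact ⟨this.1, hzb⟩
  -- find a point of S in ball w r
  obtain ⟨a, haA, had⟩ := Metric.mem_closure_iff.1 hend r hr
  have haS : a ∈ S ∩ ball w r := by
    rw [hSA]; exact ⟨haA, mem_ball'.2 had⟩
  have haw : a ≠ w := by
    rintro rfl
    have := hA haA
    simp only [unitDisc, mem_setOf_eq] at this
    simp only [unitCircle, mem_setOf_eq] at hw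
    linarith
  set t := dist a w with ht_def
  have ht : 0 < t := dist_pos.2 haw
  have htr : t < r := mem_ball.1 haS.2
  -- the image of insert w S under dist · w contains [0, t]
  set f : ℂ → ℝ := fun z => dist z w with hf_def
  have hf_cont : Continuous f := (continuous_id.dist continuous_const)
  have himg_conn : IsPreconnected (f '' insert w S) :=
    hS_conn.isPreconnected.image f hf_cont.continuousOn
  have h0 : (0 : ℝ) ∈ f '' insert w S :=
    ⟨w, mem_insert _ _, dist_self w⟩
  have hT : t ∈ f '' insert w S := ⟨a, mem_insert_of_mem _ haS.1, rfl⟩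
  have hIcc : Set.Icc 0 t ⊆ f '' insert w S :=
    himg_conn.ordConnected.out h0 hT
  -- every x in (0, t) comes from range φ
  have hIoo : Set.Ioo 0 t ⊆ f '' Set.range φ := by
    rintro x ⟨hx0, hxt⟩
    obtain ⟨z, hz, hfz⟩ := hIcc ⟨le_of_lt hx0, le_of_lt hxt⟩
    have hzS : z ∈ S := by
      rcases hz with rfl | hz
      · exfalso; simp only [hf_def, dist_self] at hfz; linarith
      · exact hz
    have hzb : z ∈ ball w r := by
      rw [mem_ball]
      calc dist z w = x := hfz
        _ < t := hxt
        _ < r := htr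
    have : z ∈ Set.range φ ∩ ball w r := hSφ ▸ ⟨hzS, hzb⟩
    exact ⟨z, this.1, hfz⟩
  -- contradiction with countability
  have hcnt : (Set.Ioo (0:ℝ) t).Countable :=
    ((countable_range φ).image f).mono hIoo
  have := hcnt.le_aleph0
  rw [Cardinal.mk_Ioo_real ht] at this
  exact absurd this (not_le.2 Cardinal.aleph0_lt_continuum)
end
end

section
/- The approach region A = {(1 − n^{-2}) e^{i/n} : n ∈ ℕ}, which ends sequentially and tangentially at the boundary point 1 of the unit disc, is 2-projectively adjacent to 1: for every r > 0 there exists α_r > 0 such that the arc {e^{iθ} : 0 < θ < α_r} is contained in Γ_2^*(A ∩ B(1,r)). In particular, the classes of sequential, tangential, and projectively adjacent approach regions at 1 have nonempty intersection. -/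
open Metric Set Filter

noncomputable section

def tau (w z : ℂ) : ℝ := (1 - ‖z‖) / ‖w - z‖

/-- `A^♮ = inf_{r>0} sup_{z ∈ A ∩ B(w,r)} τ(w,z)` -/
def highTau (w : ℂ) (A : Set ℂ) : ℝ :=
  sInf ((fun r => sSup (tau w '' (A ∩ ball w r))) '' Ioi (0:ℝ))

def TangentialAt (w : ℂ) (A : Set ℂ) : Prop := highTau w A = 0

/-- The nontangential approach region `Γ_b(u)`. -/
def Gam (b : ℕ) (u : ℂ) : Set ℂ := {z ∈ unitDisc | 1 / (1 + (b:ℝ)) < tau u z}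

/-- The shadow `Γ_b^*(U) = {u ∈ ∂D : Γ_b(u) ∩ U ≠ ∅}`. -/
def GamStar (b : ℕ) (U : Set ℂ) : Set ℂ :=
  {u ∈ unitCircle | (Gam b u ∩ U).Nonempty}

/-- `J` is an arc of `∂D` with endpoint `w`. -/
def ArcWithEndpoint (w : ℂ) (J : Set ℂ) : Prop :=
  ∃ θ : ℝ, 0 < θ ∧ θ ≤ 2 * Real.pi ∧
    (J = (fun α : ℝ => w * Complex.exp (α * Complex.I)) '' Ioo 0 θ ∨
     J = (fun α : ℝ => w * Complex.exp (-(α * Complex.I))) '' Ioo 0 θ)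

/-- `S ⇝ w` : `S` contains an arc with endpoint `w`. -/
def Adjacent (S : Set ℂ) (w : ℂ) : Prop := ∃ J, ArcWithEndpoint w J ∧ J ⊆ S

/-- `A` is projectively adjacent to `w`. -/
def ProjAdjacent (w : ℂ) (A : Set ℂ) : Prop :=
  ∃ b : ℕ, ∀ r > 0, Adjacent (GamStar b (A ∩ ball w r)) w

/-- The sequence `z_n = (1 − n⁻²) e^{i/n}` (indexed so that `n ≥ 1`). -/
def seq12 (n : ℕ) : ℂ :=
  ((1 - 1/((n:ℝ)+1)^2 : ℝ) : ℂ) * Complex.exp (Complex.I / ((n:ℂ) + 1))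

/-! ### Auxiliary lemmas -/

lemma exp_sub_one_le (x : ℝ) : ‖Complex.exp (x*Complex.I) - 1‖ ≤ |x| := by
  have h2 : Complex.exp ((x:ℂ)*Complex.I) - 1 = Complex.mk (Real.cos x - 1) (Real.sin x) := by
    rw [Complex.exp_mul_I]
    apply Complex.ext <;> simp [Complex.cos_ofReal_re, Complex.sin_ofReal_re]
  rw [h2, Complex.norm_def, Complex.normSq_mk]
  have hc : 1 - x^2/2 ≤ Real.cos x := Real.one_sub_sq_div_two_le_cos
  have hb : (Real.cos x - 1) * (Real.cos x - 1) + Real.sin x * Real.sin x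
      = 2 - 2 * Real.cos x := by
    have := Real.sin_sq_add_cos_sq x; nlinarith
  rw [hb]
  have h3 : 2 - 2 * Real.cos x ≤ x^2 := by linarith
  calc Real.sqrt (2 - 2*Real.cos x) ≤ Real.sqrt (x^2) := Real.sqrt_le_sqrt h3
    _ = |x| := Real.sqrt_sq_eq_abs x

lemma exp_diff_le (a b : ℝ) :
    ‖Complex.exp (a*Complex.I) - Complex.exp (b*Complex.I)‖ ≤ |a - b| := by
  have h : Complex.exp (a*Complex.I) - Complex.exp (b*Complex.I)
      = Complex.exp (b*Complex.I) * (Complex.exp (((a-b:ℝ))*Complex.I) - 1) := by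
    rw [mul_sub, mul_one, ← Complex.exp_add]
    push_cast; ring_nf
  rw [h, norm_mul, Complex.norm_exp_ofReal_mul_I, one_mul]
  exact exp_sub_one_le (a-b)

lemma seq12_eq (n : ℕ) : seq12 n
    = ((1 - 1/((n:ℝ)+1)^2 : ℝ) : ℂ) * Complex.exp (((1/((n:ℝ)+1) : ℝ) : ℂ) * Complex.I) := by
  unfold seq12
  congr 2
  have h : ((n:ℂ) + 1) ≠ 0 := by
    have h0 : ((((n:ℝ)+1 : ℝ)) : ℂ) ≠ 0 := Complex.ofReal_ne_zero.mpr (by positivity)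
    push_cast at h0
    exact h0
  push_cast
  field_simp

lemma m_pos (n : ℕ) : (0:ℝ) < (n:ℝ) + 1 := by positivity

lemma abs_seq12 (n : ℕ) : ‖seq12 n‖ = 1 - 1/((n:ℝ)+1)^2 := by
  rw [seq12_eq, norm_mul, Complex.norm_exp_ofReal_mul_I, mul_one, Complex.norm_real, Real.norm_eq_abs]
  rw [abs_of_nonneg]
  have h1 : (1:ℝ) ≤ ((n:ℝ)+1)^2 := by nlinarith [Nat.cast_nonneg (α := ℝ) n]
  have := (div_le_one (by positivity : (0:ℝ) < ((n:ℝ)+1)^2)).mpr h1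
  linarith

lemma abs_seq12_lt (n : ℕ) : ‖seq12 n‖ < 1 := by
  rw [abs_seq12]
  have : (0:ℝ) < 1/((n:ℝ)+1)^2 := by positivity
  linarith

lemma dist_seq12 (n : ℕ) : ‖seq12 n - 1‖ ≤ 2/((n:ℝ)+1) := by
  have hm := m_pos n
  set M : ℝ := (n:ℝ) + 1
  have key : seq12 n - 1 = (((1 - 1/M^2 : ℝ) : ℂ) - 1) * Complex.exp (((1/M : ℝ):ℂ) * Complex.I)
      + (Complex.exp (((1/M : ℝ):ℂ) * Complex.I) - 1) := by
    rw [seq12_eq]; ring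
  rw [key]
  calc ‖_‖ ≤ ‖(((1 - 1/M^2 : ℝ) : ℂ) - 1)
        * Complex.exp (((1/M : ℝ):ℂ) * Complex.I)‖
        + ‖Complex.exp (((1/M : ℝ):ℂ) * Complex.I) - 1‖ := norm_add_le _ _
    _ ≤ 1/M^2 + 1/M := by
        rw [norm_mul, Complex.norm_exp_ofReal_mul_I, mul_one]
        have h1 : (((1 - 1/M^2 : ℝ) : ℂ) - 1) = ((-(1/M^2) : ℝ) : ℂ) := by push_cast; ring
        rw [h1, Complex.norm_real, Real.norm_eq_abs, abs_neg, abs_of_nonneg (by positivity)]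
        have := exp_sub_one_le (1/M)
        rw [abs_of_nonneg (by positivity : (0:ℝ) ≤ 1/M)] at this
        linarith
    _ ≤ 2/M := by
        have hM1 : (1:ℝ) ≤ M := by simp [M]
        have : 1/M^2 ≤ 1/M := by
          rw [div_le_div_iff₀ (by positivity) hm]; nlinarith
        have h2 : 2/M = 1/M + 1/M := by ring
        linarith

lemma low_seq12 (n : ℕ) : (9/16)/((n:ℝ)+1) ≤ ‖1 - seq12 n‖ := by
  rcases Nat.eq_zero_or_pos n with h0 | hn
  · subst h0
    have : seq12 0 = 0 := by
      rw [seq12_eq]; norm_num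
    rw [this]
    norm_num
  · have hm := m_pos n
    set M : ℝ := (n:ℝ) + 1 with hMdef
    have hM2 : (2:ℝ) ≤ M := by
      have : (1:ℝ) ≤ (n:ℝ) := by exact_mod_cast hn
      simp only [M]; linarith
    have hφ1 : 1/M ≤ 1 := by rw [div_le_one hm]; linarith
    have hφ0 : 0 < 1/M := by positivity
    have hsin : (15/16) * (1/M) ≤ Real.sin (1/M) := by
      have := Real.sin_gt_sub_cube hφ0
      have hsq : (1/M)^2 ≤ 1/4 := by
        rw [div_pow, one_pow, div_le_div_iff₀ (by positivity) (by norm_num)]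
        nlinarith
      nlinarith [hφ0]
    have him : (seq12 n).im = (1 - 1/M^2) * Real.sin (1/M) := by
      rw [seq12_eq, Complex.mul_im, Complex.ofReal_re, Complex.ofReal_im,
        Complex.exp_ofReal_mul_I_im, ← hMdef]
      ring
    have hδ : 1/M^2 ≤ 1/4 := by
      rw [div_le_div_iff₀ (by positivity) (by norm_num)]; nlinarith
    have h1 : (9/16)/M ≤ (seq12 n).im := by
      rw [him]
      have : (3/4 : ℝ) * ((15/16) * (1/M)) ≤ (1 - 1/M^2) * Real.sin (1/M) := by
        apply mul_le_mul (by linarith) hsin (by positivity) (by linarith)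
      calc (9/16)/M ≤ (3/4 : ℝ) * ((15/16) * (1/M)) := by
            rw [div_eq_mul_one_div (9/16 : ℝ) M]; nlinarith [hφ0]
        _ ≤ _ := this
    calc (9/16)/M ≤ (seq12 n).im := h1
      _ ≤ |(1 - seq12 n).im| := by
          rw [Complex.sub_im]
          simp only [Complex.one_im, zero_sub, abs_neg]
          exact le_abs_self _
      _ ≤ ‖1 - seq12 n‖ := Complex.abs_im_le_norm _

lemma tau_nonneg (n : ℕ) : 0 ≤ tau 1 (seq12 n) := by
  unfold tau
  apply div_nonneg _ (norm_nonneg _)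
  linarith [abs_seq12_lt n]

lemma tau_le (n : ℕ) : tau 1 (seq12 n) ≤ (16/9)/((n:ℝ)+1) := by
  have hm := m_pos n
  set M : ℝ := (n:ℝ) + 1
  have hlow := low_seq12 n
  have hd0 : 0 < ‖1 - seq12 n‖ := lt_of_lt_of_le (by positivity) hlow
  have ht : tau 1 (seq12 n) = (1/M^2) / ‖1 - seq12 n‖ := by
    unfold tau
    rw [abs_seq12]
    simp only [M]; ring
  rw [ht]
  calc (1/M^2) / ‖1 - seq12 n‖ ≤ (1/M^2) / ((9/16)/M) := by
        gcongr
    _ = (16/9)/M := by field_simp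
  
lemma tendsto_seq12 : Tendsto seq12 atTop (nhds 1) := by
  rw [tendsto_iff_dist_tendsto_zero]
  apply squeeze_zero (fun n => dist_nonneg)
    (g := fun n : ℕ => 2 * (1/((n:ℝ)+1)))
  · intro n
    rw [Complex.dist_eq]
    have := dist_seq12 n
    rw [div_eq_mul_one_div] at this
    exact this
  · simpa using (tendsto_one_div_add_atTop_nhds_zero_nat (𝕜 := ℝ)).const_mul 2

lemma main1 (r : ℝ) (hr : 0 < r) : ∀ θ : ℝ, 0 < θ → θ < min (r/2) (1/2) →
    Complex.exp (θ*Complex.I) ∈ GamStar 2 (Set.range seq12 ∩ ball 1 r) := by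
  intro θ hθ hθα
  have hθr : θ < r/2 := lt_of_lt_of_le hθα (min_le_left _ _)
  have hθh : θ < 1/2 := lt_of_lt_of_le hθα (min_le_right _ _)
  set m : ℕ := ⌈1/θ⌉₊ with hm
  have h2m : 2 ≤ m := by
    have h2 : (2:ℝ) < 1/θ := by rw [lt_div_iff₀ hθ]; linarith
    have := Nat.lt_ceil.mpr (by exact_mod_cast h2 : ((2:ℕ):ℝ) < 1/θ)
    omega
  set M : ℝ := (m:ℝ) with hM
  have hM2 : (2:ℝ) ≤ M := by rw [hM]; exact_mod_cast h2m
  have hM0 : (0:ℝ) < M := by linarith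
  have hφθ : 1/M ≤ θ := by
    have h1 : 1/θ ≤ M := Nat.le_ceil (1/θ)
    rw [div_le_iff₀ hθ] at h1
    rw [div_le_iff₀ hM0]
    nlinarith
  have hθM : θ * (M - 1) < 1 := by
    have h1 : M < 1/θ + 1 := Nat.ceil_lt_add_one (by positivity)
    have h2 : M - 1 < 1/θ := by linarith
    calc θ * (M - 1) < θ * (1/θ) := by
          apply mul_lt_mul_of_pos_left h2 hθ
      _ = 1 := by field_simp
  have hn : ((m-1:ℕ):ℝ) + 1 = M := by
    have h1 : 1 ≤ m := by omega
    rw [Nat.cast_sub h1]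
    simp [hM]
  set δ : ℝ := 1/M^2 with hδdef
  have hδ0 : 0 < δ := by positivity
  set z := seq12 (m-1) with hz
  have habs : ‖z‖ = 1 - δ := by
    rw [hz, abs_seq12, hn]
  have hzeq : z = ((1 - δ : ℝ) : ℂ) * Complex.exp (((1/M : ℝ):ℂ) * Complex.I) := by
    rw [hz, seq12_eq, hn]
  -- z is in the ball
  have hball : z ∈ ball (1:ℂ) r := by
    rw [mem_ball, Complex.dist_eq]
    have := dist_seq12 (m-1)
    rw [hn, ← hz] at this
    have h1M : 1 ≤ θ * M := (div_le_iff₀ hM0).mp hφθ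
    have h2 : 2/M ≤ 2*θ := by
      rw [div_le_iff₀ hM0]
      nlinarith
    linarith
  -- distance estimate
  have hd : ‖Complex.exp ((θ:ℂ)*Complex.I) - z‖ < 3*δ := by
    have split : Complex.exp ((θ:ℂ)*Complex.I) - z
        = (Complex.exp ((θ:ℂ)*Complex.I) - Complex.exp (((1/M : ℝ):ℂ) * Complex.I))
          + (Complex.exp (((1/M : ℝ):ℂ) * Complex.I) - z) := by ring
    have e1 : ‖Complex.exp ((θ:ℂ)*Complex.I)
        - Complex.exp (((1/M : ℝ):ℂ) * Complex.I)‖ ≤ θ - 1/M := by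
      have := exp_diff_le θ (1/M)
      rwa [abs_of_nonneg (by linarith)] at this
    have e2 : ‖Complex.exp (((1/M : ℝ):ℂ) * Complex.I) - z‖ = δ := by
      rw [hzeq]
      have : Complex.exp (((1/M : ℝ):ℂ) * Complex.I)
          - ((1 - δ : ℝ) : ℂ) * Complex.exp (((1/M : ℝ):ℂ) * Complex.I)
          = ((δ : ℝ) : ℂ) * Complex.exp (((1/M : ℝ):ℂ) * Complex.I) := by
        push_cast; ring
      rw [this, norm_mul, Complex.norm_exp_ofReal_mul_I, mul_one, Complex.norm_real, Real.norm_eq_abs,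
        abs_of_nonneg hδ0.le]
    have e3 : θ - 1/M < 2*δ := by
      -- θ < 1/(M-1) and 1/(M-1) - 1/M = 1/(M(M-1)) ≤ 2/M²
      have hM1 : (0:ℝ) < M - 1 := by linarith
      have hθlt : θ < 1/(M-1) := by
        rw [lt_div_iff₀ hM1]; linarith
      have key : 1/(M-1) - 1/M ≤ 2/M^2 := by
        rw [div_sub_div _ _ (ne_of_gt hM1) (ne_of_gt hM0),
          div_le_div_iff₀ (by positivity) (by positivity)]
        nlinarith
      have : 2*δ = 2/M^2 := by rw [hδdef]; ring
      linarith
    calc ‖Complex.exp ((θ:ℂ)*Complex.I) - z‖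
        ≤ ‖Complex.exp ((θ:ℂ)*Complex.I) - Complex.exp (((1/M : ℝ):ℂ) * Complex.I)‖
          + ‖Complex.exp (((1/M : ℝ):ℂ) * Complex.I) - z‖ := by
          rw [split]; exact norm_add_le _ _
      _ ≤ (θ - 1/M) + δ := by rw [e2]; linarith [e1]
      _ < 3*δ := by linarith
  have hd0 : 0 < ‖Complex.exp ((θ:ℂ)*Complex.I) - z‖ := by
    rw [norm_pos_iff, sub_ne_zero]
    intro hcontra
    have h1 : ‖Complex.exp ((θ:ℂ)*Complex.I)‖ = 1 :=
      Complex.norm_exp_ofReal_mul_I θ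
    rw [hcontra, habs] at h1
    linarith
  refine ⟨Complex.norm_exp_ofReal_mul_I θ, z, ⟨⟨?_, ?_⟩, ⟨mem_range_self _, hball⟩⟩⟩
  · show ‖z‖ < 1
    rw [habs]; linarith
  · show 1 / (1 + ((2:ℕ):ℝ)) < tau (Complex.exp ((θ:ℂ)*Complex.I)) z
    have h13 : 1 / (1 + ((2:ℕ):ℝ)) = 1/3 := by norm_num
    rw [h13]
    unfold tau
    rw [habs]
    have hnum : 1 - (1 - δ) = δ := by ring
    rw [hnum, lt_div_iff₀ hd0]
    linarith

theorem stmt12 :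
    (∀ r > 0, ∃ α > 0, ∀ θ : ℝ, 0 < θ → θ < α →
      Complex.exp (θ * Complex.I) ∈ GamStar 2 (Set.range seq12 ∩ ball 1 r)) ∧
    SeqEnding 1 (Set.range seq12) ∧
    (1:ℂ) ∈ closure (Set.range seq12) ∧
    TangentialAt 1 (Set.range seq12) ∧
    ProjAdjacent 1 (Set.range seq12) := by
  refine ⟨?_, ?_, ?_, ?_, ?_⟩
  · intro r hr
    exact ⟨min (r/2) (1/2), by positivity, main1 r hr⟩
  · exact ⟨seq12, fun j => abs_seq12_lt j, tendsto_seq12, 1, one_pos, rfl⟩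
  · exact mem_closure_of_tendsto tendsto_seq12 (Eventually.of_forall fun n => mem_range_self n)
  · unfold TangentialAt highTau
    have hnn : ∀ r, r ∈ Ioi (0:ℝ) →
        0 ≤ sSup (tau 1 '' (Set.range seq12 ∩ ball 1 r)) := by
      intro r hr
      apply Real.sSup_nonneg
      rintro x ⟨w, ⟨⟨n, rfl⟩, -⟩, rfl⟩
      exact tau_nonneg n
    have hbdd : BddBelow ((fun r => sSup (tau 1 '' (Set.range seq12 ∩ ball 1 r))) '' Ioi (0:ℝ)) := by
      refine ⟨0, ?_⟩
      rintro x ⟨r, hr, rfl⟩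
      exact hnn r hr
    apply le_antisymm
    · refine le_of_forall_pos_le_add fun ε hε => ?_
      rw [zero_add]
      have hmem : sSup (tau 1 '' (Set.range seq12 ∩ ball 1 (ε/4)))
          ∈ (fun r => sSup (tau 1 '' (Set.range seq12 ∩ ball 1 r))) '' Ioi (0:ℝ) :=
        ⟨ε/4, mem_Ioi.mpr (by positivity), rfl⟩
      refine le_trans (csInf_le hbdd hmem) ?_
      apply Real.sSup_le _ hε.le
      rintro x ⟨w, ⟨⟨n, rfl⟩, hball⟩, rfl⟩
      have hm := m_pos n
      set M : ℝ := (n:ℝ) + 1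
      have hdist : ‖1 - seq12 n‖ < ε/4 := by
        rw [mem_ball, Complex.dist_eq] at hball
        rw [norm_sub_rev]
        exact hball
      have hlow := low_seq12 n
      have h1 : (9/16)/M < ε/4 := lt_of_le_of_lt hlow hdist
      rw [div_lt_iff₀ hm] at h1
      have h2 : (16/9)/M ≤ ε := by
        rw [div_le_iff₀ hm]
        nlinarith
      exact le_trans (tau_le n) h2
    · apply Real.sInf_nonneg
      rintro x ⟨r, hr, rfl⟩
      exact hnn r hr
  · refine ⟨2, fun r hr => ?_⟩
    set α : ℝ := min (r/2) (1/2) with hα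
    have hα0 : 0 < α := by positivity
    refine ⟨(fun a : ℝ => (1:ℂ) * Complex.exp ((a:ℂ) * Complex.I)) '' Ioo 0 α,
      ⟨α, hα0, ?_, Or.inl rfl⟩, ?_⟩
    · have : α ≤ 1/2 := min_le_right _ _
      have hπ := Real.pi_gt_three
      linarith
    · rintro x ⟨θ, ⟨h0, hθ⟩, rfl⟩
      simp only [one_mul]
      exact main1 r hr θ h0 hθ
end
end

section
/- Let d(n) = 2^n and z_n = (1 − 4^{−d(n)}) exp(i·4^{−d(n−1)}) for n ∈ ℕ. Then A = {z_n : n ∈ ℕ} ends sequentially and tangentially at the boundary point 1 of the unit disc, but A is NOT projectively adjacent to 1: for every b ∈ ℕ there exists r > 0 such that the shadow Γ_b^*(A ∩ B(1,r)) contains no arc with endpoint 1. -/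
open Metric Set Filter

noncomputable section

/-- `z_n = (1 − 4^{−2^n}) exp(i·4^{−2^{n−1}})`, indexed so that `n ≥ 1`:
`seq13 n` corresponds to the paper's `z_{n+1}`, with `d(n) = 2^n`. -/
def seq13 (n : ℕ) : ℂ :=
  ((1 - ((4:ℝ)⁻¹)^(2^(n+1)) : ℝ) : ℂ) *
    Complex.exp ((((4:ℝ)⁻¹)^(2^n) : ℝ) * Complex.I)

/-! ### auxiliary -/

def th13 (n : ℕ) : ℝ := (4:ℝ)⁻¹ ^ (2^n)

lemma th13_pos (n : ℕ) : 0 < th13 n := pow_pos (by norm_num) _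

lemma th13_le (n : ℕ) : th13 n ≤ 4⁻¹ := by
  have h := pow_le_pow_of_le_one (a := (4:ℝ)⁻¹) (by norm_num) (by norm_num)
    (Nat.one_le_two_pow (n := n))
  rw [pow_one] at h
  exact h

lemma th13_succ (n : ℕ) : th13 (n+1) = th13 n ^ 2 := by
  unfold th13
  rw [pow_succ, pow_mul]

lemma th13_sq_le (h : n < m) : th13 m ≤ th13 n ^ 2 := by
  rw [← th13_succ]
  exact pow_le_pow_of_le_one (by norm_num) (by norm_num)
    (Nat.pow_le_pow_right (by norm_num) h)

lemma th13_tendsto : Tendsto th13 atTop (nhds 0) := by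
  have h1 : Tendsto (fun n : ℕ => ((4:ℝ)⁻¹) ^ n) atTop (nhds 0) :=
    tendsto_pow_atTop_nhds_zero_of_lt_one (by norm_num) (by norm_num)
  refine tendsto_of_tendsto_of_tendsto_of_le_of_le tendsto_const_nhds h1
    (fun n => (th13_pos n).le) (fun n => ?_)
  exact pow_le_pow_of_le_one (by norm_num) (by norm_num) (Nat.lt_two_pow_self (n := n)).le

lemma seq13_eq (n : ℕ) :
    seq13 n = ((1 - th13 n ^ 2 : ℝ) : ℂ) * Complex.exp ((th13 n : ℝ) * Complex.I) := by
  unfold seq13 th13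
  rw [pow_succ, pow_mul]

lemma th13_sq_lt (n : ℕ) : th13 n ^ 2 ≤ (16:ℝ)⁻¹ := by
  have h1 := th13_le n
  have h2 := (th13_pos n).le
  nlinarith

lemma abs_seq13 (n : ℕ) : ‖seq13 n‖ = 1 - th13 n ^ 2 := by
  rw [seq13_eq, norm_mul, Complex.norm_exp_ofReal_mul_I, mul_one, Complex.norm_real, Real.norm_eq_abs,
    abs_of_pos]
  have := th13_sq_lt n
  linarith

/-- distance formula -/
lemma dist_sq13 (β t δ : ℝ) :
    ‖Complex.exp ((β:ℂ) * Complex.I) - ((1 - δ : ℝ):ℂ) * Complex.exp ((t:ℂ) * Complex.I)‖ ^ 2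
      = δ^2 + 2*(1-δ)*(1 - Real.cos (β - t)) := by
  rw [Complex.sq_norm, Complex.normSq_apply]
  simp only [Complex.sub_re, Complex.sub_im, Complex.mul_re, Complex.mul_im,
    Complex.exp_ofReal_mul_I_re, Complex.exp_ofReal_mul_I_im, Complex.ofReal_re,
    Complex.ofReal_im, Real.cos_sub]
  linear_combination Real.sin_sq_add_cos_sq β + (1-δ)^2 * Real.sin_sq_add_cos_sq t

/-- lower bound on the distance -/
lemma dist_lower13 (β t δ : ℝ) (hδ0 : 0 ≤ δ) (hδ : δ ≤ 1/2) (h1 : |β - t| ≤ 1) :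
    3/5 * |β - t| ≤
      ‖Complex.exp ((β:ℂ) * Complex.I) - ((1 - δ : ℝ):ℂ) * Complex.exp ((t:ℂ) * Complex.I)‖ := by
  set D := ‖Complex.exp ((β:ℂ) * Complex.I) - ((1 - δ : ℝ):ℂ) * Complex.exp ((t:ℂ) * Complex.I)‖ with hDdef
  have hD : 0 ≤ D := norm_nonneg _
  have hsq := dist_sq13 β t δ
  rw [← hDdef] at hsq
  have hx2 : (β - t)^2 ≤ 1 := by
    nlinarith [sq_abs (β - t), abs_nonneg (β - t)]
  have hx4 : (β - t)^4 ≤ (β - t)^2 := by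
    nlinarith [sq_nonneg (β - t), sq_nonneg ((β-t)^2)]
  have hb := Real.cos_bound (x := β - t) h1
  have h4 : |β - t| ^ 4 = (β - t)^4 := by
    rw [show (4:ℕ) = 2*2 from rfl, pow_mul, sq_abs, ← pow_mul]
  rw [h4, abs_le] at hb
  have hcos : Real.cos (β - t) ≤ 1 - 43/96 * (β-t)^2 := by
    nlinarith [hb.2]
  have hcos1 : Real.cos (β - t) ≤ 1 := Real.cos_le_one _
  have hD2 : 43/96 * (β-t)^2 ≤ D^2 := by nlinarith [sq_nonneg δ]
  nlinarith [sq_abs (β - t), abs_nonneg (β - t)]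

lemma tau_eq13 (u : ℂ) (n : ℕ) :
    tau u (seq13 n) = th13 n ^ 2 / ‖u - seq13 n‖ := by
  unfold tau
  rw [abs_seq13]; ring_nf

/-- if the distance to `seq13 n` is at least `c·θₙ²` then `τ ≤ 1/c`. -/
lemma tau_le13 (β : ℝ) (n : ℕ) (h1 : |β - th13 n| ≤ 1) (c : ℝ) (hc : 0 < c)
    (h : c * th13 n ^ 2 ≤ 3/5 * |β - th13 n|) :
    tau (Complex.exp ((β:ℂ) * Complex.I)) (seq13 n) ≤ 1/c := by
  have hlow := dist_lower13 β (th13 n) (th13 n ^ 2) (sq_nonneg _)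
    (by nlinarith [th13_sq_lt n]) h1
  rw [← seq13_eq] at hlow
  have ht := th13_pos n
  have hcd : 0 < c * th13 n ^ 2 := by positivity
  have hDpos : 0 < ‖Complex.exp ((β:ℂ) * Complex.I) - seq13 n‖ := by
    linarith
  rw [tau_eq13, div_le_div_iff₀ hDpos hc]
  nlinarith

lemma ball_theta13 (n : ℕ) (r : ℝ) (h : seq13 n ∈ ball (1:ℂ) r) : th13 n < 5/3 * r := by
  rw [mem_ball, Complex.dist_eq] at h
  have h0 : |(0:ℝ) - th13 n| ≤ 1 := by
    rw [abs_le]; constructor <;> nlinarith [th13_pos n, th13_le n]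
  have hlow := dist_lower13 0 (th13 n) (th13 n ^ 2) (sq_nonneg _)
    (by nlinarith [th13_sq_lt n]) h0
  rw [← seq13_eq] at hlow
  have h1 : Complex.exp ((0:ℝ) * Complex.I) = 1 := by simp
  rw [h1] at hlow
  have habs : |(0:ℝ) - th13 n| = th13 n := by
    rw [zero_sub, abs_neg, abs_of_pos (th13_pos n)]
  rw [habs] at hlow
  have hsub : ‖1 - seq13 n‖ < r := by
    rw [norm_sub_rev]; exact h
  linarith

lemma seq13_mem_disc (n : ℕ) : seq13 n ∈ unitDisc := by
  have := abs_seq13 n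
  have ht := th13_pos n
  simp only [unitDisc, mem_setOf_eq, this]
  nlinarith

lemma seq13_tendsto : Tendsto seq13 atTop (nhds 1) := by
  have hth := th13_tendsto
  have h1r : Tendsto (fun n => (1 - th13 n ^ 2 : ℝ)) atTop (nhds 1) := by
    have h := Tendsto.sub (tendsto_const_nhds (x := (1:ℝ))) (hth.mul hth)
    rw [mul_zero, sub_zero] at h
    simpa [pow_two] using h
  have h1 : Tendsto (fun n => ((1 - th13 n ^ 2 : ℝ) : ℂ)) atTop (nhds 1) := by
    rw [show ((1:ℂ)) = ((1:ℝ):ℂ) by norm_num]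
    exact (Complex.continuous_ofReal.tendsto _).comp h1r
  have hc : Tendsto (fun n => ((th13 n : ℝ) : ℂ) * Complex.I) atTop (nhds 0) := by
    have h0 : Tendsto (fun n => ((th13 n : ℝ) : ℂ)) atTop (nhds 0) := by
      rw [show ((0:ℂ)) = ((0:ℝ):ℂ) by norm_num]
      exact (Complex.continuous_ofReal.tendsto _).comp hth
    simpa using h0.mul_const Complex.I
  have h2 : Tendsto (fun n => Complex.exp ((th13 n : ℝ) * Complex.I)) atTop (nhds 1) := by
    have := (Complex.continuous_exp.tendsto 0).comp hc
    rw [Complex.exp_zero] at this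
    exact this
  have := h1.mul h2
  rw [mul_one] at this
  exact this.congr fun n => (seq13_eq n).symm

lemma one_sub_abs_lower13 (n : ℕ) : 3/5 * th13 n ≤ ‖1 - seq13 n‖ := by
  have h0 : |(0:ℝ) - th13 n| ≤ 1 := by
    rw [abs_le]; constructor <;> nlinarith [th13_pos n, th13_le n]
  have hlow := dist_lower13 0 (th13 n) (th13 n ^ 2) (sq_nonneg _)
    (by nlinarith [th13_sq_lt n]) h0
  rw [← seq13_eq] at hlow
  have h1 : Complex.exp (((0:ℝ):ℂ) * Complex.I) = 1 := by simp
  rw [h1] at hlow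
  have habs : |(0:ℝ) - th13 n| = th13 n := by
    rw [zero_sub, abs_neg, abs_of_pos (th13_pos n)]
  rw [habs] at hlow
  exact hlow

lemma ball_theta13' (n : ℕ) (r : ℝ) (h : seq13 n ∈ ball (1:ℂ) r) : th13 n < 5/3 * r := by
  rw [mem_ball, Complex.dist_eq] at h
  have hsub : ‖1 - seq13 n‖ < r := by
    rw [norm_sub_rev]; exact h
  have := one_sub_abs_lower13 n
  linarith

lemma tau_one_nonneg13 (n : ℕ) : 0 ≤ tau 1 (seq13 n) := by
  rw [tau_eq13]
  positivity

lemma tau_one_le13 (n : ℕ) : tau 1 (seq13 n) ≤ 5/3 * th13 n := by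
  rw [tau_eq13]
  have hlow := one_sub_abs_lower13 n
  have ht := th13_pos n
  have hD : 0 < ‖1 - seq13 n‖ := by linarith
  rw [div_le_iff₀ hD]
  nlinarith

lemma tangential13 : TangentialAt 1 (Set.range seq13) := by
  unfold TangentialAt highTau
  set A := Set.range seq13
  set F : ℝ → ℝ := fun r => sSup (tau 1 '' (A ∩ ball 1 r)) with hF
  have hnonneg : ∀ x ∈ F '' Ioi (0:ℝ), 0 ≤ x := by
    rintro x ⟨r, -, rfl⟩
    apply Real.sSup_nonneg
    rintro y ⟨z, ⟨⟨n, rfl⟩, -⟩, rfl⟩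
    exact tau_one_nonneg13 n
  have hne : (F '' Ioi (0:ℝ)).Nonempty := ⟨F 1, 1, by norm_num, rfl⟩
  have hbdd : BddBelow (F '' Ioi (0:ℝ)) := ⟨0, fun x hx => hnonneg x hx⟩
  have h0 : 0 ≤ sInf (F '' Ioi (0:ℝ)) := le_csInf hne hnonneg
  have h1 : ∀ ε > (0:ℝ), sInf (F '' Ioi (0:ℝ)) ≤ ε := by
    intro ε hε
    have hmem : F (9/25*ε) ∈ F '' Ioi (0:ℝ) := ⟨9/25*ε, mem_Ioi.mpr (by positivity), rfl⟩
    refine csInf_le_of_le hbdd hmem ?_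
    apply Real.sSup_le _ hε.le
    rintro y ⟨z, ⟨⟨n, rfl⟩, hball⟩, rfl⟩
    have h2 := ball_theta13' n _ hball
    have h3 := tau_one_le13 n
    linarith
  have h2 : sInf (F '' Ioi (0:ℝ)) ≤ 0 := by
    apply le_of_forall_pos_le_add
    intro ε hε
    simpa using h1 ε hε
  linarith

lemma numA13 (c t s : ℝ) (ht0 : 0 < t) (ht4 : t ≤ 1/4) (hct : c * t ≤ 3/10)
    (hs0 : 0 ≤ s) (hs : s ≤ t^2) : c * t^2 ≤ 3/5 * (t - 2*s) := by
  nlinarith [mul_le_mul_of_nonneg_right hct ht0.le, mul_le_mul_of_nonneg_right ht4 ht0.le]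

lemma numB13 (c s : ℝ) (hs0 : 0 < s) (hcs : c * s ≤ 3/10) : c * s^2 ≤ 3/5 * s := by
  nlinarith [mul_le_mul_of_nonneg_right hcs hs0.le]

lemma numC13 (c t s : ℝ) (hc : 1 ≤ c) (hs0 : 0 < s) (hs4 : s ≤ 1/4) (hcs : c * s ≤ 3/10)
    (ht0 : 0 < t) (ht : t ≤ s^2) : c * t^2 ≤ 3/5 * (2*s - t) := by
  have hss : s^2 ≤ s/4 := by nlinarith
  have ht2 : t^2 ≤ s^4 := by nlinarith [mul_le_mul ht ht ht0.le (sq_nonneg s)]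
  have e1 : c * t^2 ≤ c * s^4 := mul_le_mul_of_nonneg_left ht2 (by linarith)
  have e2 : c * s^4 ≤ 3/10 * s^3 := by
    nlinarith [mul_le_mul_of_nonneg_right hcs (pow_nonneg hs0.le 3)]
  have e3 : (3:ℝ)/10 * s^3 ≤ 3/10 * s := by
    nlinarith [mul_le_mul_of_nonneg_right hss hs0.le]
  nlinarith

lemma numD13 (t s : ℝ) (ht0 : 0 < t) (ht4 : t ≤ 1/4) (hs : s ≤ t^2) : 2*s ≤ t := by
  nlinarith [mul_le_mul_of_nonneg_right ht4 ht0.le]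

lemma numE13 (c t α : ℝ) (ht0 : 0 < t) (hct : c * t ≤ 3/10) (hα : 0 ≤ α) :
    c * t^2 ≤ 3/5 * (α + t) := by
  nlinarith [mul_le_mul_of_nonneg_right hct ht0.le]

lemma not_in_gamstar13 (b : ℕ) (r : ℝ) (β : ℝ)
    (h : ∀ n, seq13 n ∈ ball (1:ℂ) r →
      (1 + (b:ℝ)) * th13 n ^ 2 ≤ 3/5 * |β - th13 n| ∧ |β - th13 n| ≤ 1) :
    Complex.exp ((β:ℂ) * Complex.I) ∉ GamStar b (Set.range seq13 ∩ ball 1 r) := by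
  rintro ⟨-, z, ⟨-, htau⟩, ⟨n, rfl⟩, hball⟩
  have hn := h n hball
  have hb : (0:ℝ) < 1 + (b:ℝ) := by positivity
  have := tau_le13 β n hn.2 (1 + (b:ℝ)) hb hn.1
  linarith

lemma not_adjacent13 (b : ℕ) :
    ∃ r > 0, ¬ Adjacent (GamStar b (Set.range seq13 ∩ ball 1 r)) 1 := by
  set c : ℝ := 1 + (b:ℝ) with hc
  have hc1 : (1:ℝ) ≤ c := by simp [hc]
  have hc0 : (0:ℝ) < c := by linarith
  set ε : ℝ := 3/(10*c) with hε
  have hε0 : 0 < ε := by positivity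
  have hε3 : ε ≤ 3/10 := by
    rw [hε, div_le_iff₀ (by positivity)]
    nlinarith
  refine ⟨3/5*ε, by positivity, ?_⟩
  rintro ⟨J, ⟨θa, hθ0, hθ2π, hJ | hJ⟩, hsub⟩
  · -- positive arc
    obtain ⟨m, hm⟩ := (th13_tendsto.eventually_lt_const
      (show (0:ℝ) < min (θa/2) ε from lt_min (by linarith) hε0)).exists
    have hsθ : th13 m < θa/2 := lt_of_lt_of_le hm (min_le_left _ _)
    have hsε : th13 m < ε := lt_of_lt_of_le hm (min_le_right _ _)
    have hs0 := th13_pos m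
    have hs4 : th13 m ≤ 1/4 := le_trans (th13_le m) (by norm_num)
    set α : ℝ := 2 * th13 m with hα
    have hαIoo : α ∈ Ioo (0:ℝ) θa := ⟨by positivity, by rw [hα]; linarith⟩
    have hu : (1:ℂ) * Complex.exp ((α:ℂ) * Complex.I) ∈
        GamStar b (Set.range seq13 ∩ ball 1 (3/5*ε)) := by
      apply hsub
      rw [hJ]
      exact ⟨α, hαIoo, rfl⟩
    rw [one_mul] at hu
    refine not_in_gamstar13 b (3/5*ε) α ?_ hu
    intro n hball
    have htε : th13 n < ε := by
      have := ball_theta13' n _ hball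
      linarith
    have ht0 := th13_pos n
    have ht4 : th13 n ≤ 1/4 := le_trans (th13_le n) (by norm_num)
    have hct : c * th13 n < 3/10 := by
      rw [hε, lt_div_iff₀ (by positivity)] at htε
      nlinarith
    have hcs : c * th13 m < 3/10 := by
      rw [hε, lt_div_iff₀ (by positivity)] at hsε
      nlinarith
    constructor
    · rcases lt_trichotomy n m with hnm | hnm | hnm
      · have hsq := th13_sq_le hnm
        have h2s : 2 * th13 m ≤ th13 n := numD13 _ _ ht0 ht4 hsq
        have habs : |α - th13 n| = th13 n - α := by
          rw [abs_of_nonpos (by rw [hα]; linarith)]; ring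
        rw [habs, hα]
        exact numA13 c (th13 n) (th13 m) ht0 ht4 hct.le hs0.le hsq
      · subst hnm
        have habs : |α - th13 n| = th13 n := by
          rw [hα, show 2 * th13 n - th13 n = th13 n by ring, abs_of_pos ht0]
        rw [habs]
        have := numB13 c (th13 n) ht0 hct.le
        linarith
      · have hsq := th13_sq_le hnm
        have h2s : 2 * th13 n ≤ th13 m := numD13 _ _ hs0 hs4 hsq
        have habs : |α - th13 n| = α - th13 n := by
          rw [abs_of_nonneg (by rw [hα]; linarith)]
        rw [habs, hα]
        exact numC13 c (th13 n) (th13 m) hc1 hs0 hs4 hcs.le ht0 hsq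
    · rw [abs_le]
      constructor <;> rw [hα] <;> linarith
  · -- negative arc
    set α : ℝ := min (θa/2) (1/8) with hα
    have hα0 : 0 < α := lt_min (by linarith) (by norm_num)
    have hα8 : α ≤ 1/8 := min_le_right _ _
    have hαIoo : α ∈ Ioo (0:ℝ) θa := ⟨hα0, lt_of_le_of_lt (min_le_left _ _) (by linarith)⟩
    have hu : (1:ℂ) * Complex.exp (-((α:ℂ) * Complex.I)) ∈
        GamStar b (Set.range seq13 ∩ ball 1 (3/5*ε)) := by
      apply hsub
      rw [hJ]
      exact ⟨α, hαIoo, rfl⟩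
    have hcast : -((α:ℂ) * Complex.I) = (((-α : ℝ)):ℂ) * Complex.I := by
      push_cast; ring
    rw [one_mul, hcast] at hu
    refine not_in_gamstar13 b (3/5*ε) (-α) ?_ hu
    intro n hball
    have htε : th13 n < ε := by
      have := ball_theta13' n _ hball
      linarith
    have ht0 := th13_pos n
    have ht4 : th13 n ≤ 1/4 := le_trans (th13_le n) (by norm_num)
    have hct : c * th13 n < 3/10 := by
      rw [hε, lt_div_iff₀ (by positivity)] at htε
      nlinarith
    have habs : |(-α) - th13 n| = α + th13 n := by
      rw [abs_of_nonpos (by linarith)]; ring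
    rw [habs]
    constructor
    · have := numE13 c (th13 n) α ht0 hct.le hα0.le
      linarith
    · linarith

theorem stmt13 :
    (∀ n, seq13 n ∈ unitDisc) ∧
    Tendsto seq13 atTop (nhds 1) ∧
    SeqEnding 1 (Set.range seq13) ∧
    (1:ℂ) ∈ closure (Set.range seq13) ∧
    TangentialAt 1 (Set.range seq13) ∧
    (∀ b : ℕ, ∃ r > 0, ¬ Adjacent (GamStar b (Set.range seq13 ∩ ball 1 r)) 1) ∧
    ¬ ProjAdjacent 1 (Set.range seq13) := by
  refine ⟨seq13_mem_disc, seq13_tendsto,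
    ⟨seq13, seq13_mem_disc, seq13_tendsto, 1, one_pos, rfl⟩,
    mem_closure_of_tendsto seq13_tendsto (Eventually.of_forall fun n => mem_range_self n),
    tangential13, not_adjacent13, ?_⟩
  rintro ⟨b, hb⟩
  obtain ⟨r, hr, hno⟩ := not_adjacent13 b
  exact hno (hb r hr)
end
end

section
/- Every approach region that is attached at a boundary point w of the unit disc is projectively adjacent to w; together with the existence of projectively adjacent regions that end sequentially (hence are not attached), this shows the attached class is strictly contained in the projectively adjacent class. -/
open Metric Set Filter

noncomputable section

/-! helpers -/

lemma abs_exp_I_sub_one_le (θ : ℝ) :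
    ‖Complex.exp (θ * Complex.I) - 1‖ ≤ |θ| := by
  have h1 : Complex.exp (θ * Complex.I) - 1
      = ((Real.cos θ - 1 : ℝ) : ℂ) + ((Real.sin θ : ℝ) : ℂ) * Complex.I := by
    rw [Complex.exp_mul_I]
    push_cast [← Complex.ofReal_cos, ← Complex.ofReal_sin]
    ring
  rw [h1, Complex.norm_add_mul_I]
  have h2 : (Real.cos θ - 1) ^ 2 + Real.sin θ ^ 2 = 2 - 2 * Real.cos θ := by
    have := Real.sin_sq_add_cos_sq θ
    ring_nf
    nlinarith [Real.sin_sq_add_cos_sq θ]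
  rw [h2]
  have h3 : 2 - 2 * Real.cos θ ≤ θ ^ 2 := by
    have := Real.one_sub_sq_div_two_le_cos (x := θ)
    linarith
  calc Real.sqrt (2 - 2 * Real.cos θ) ≤ Real.sqrt (θ ^ 2) := Real.sqrt_le_sqrt h3
    _ = |θ| := Real.sqrt_sq_eq_abs θ

lemma circle_sub_disc_pos {u z : ℂ} (hu : ‖u‖ = 1) (hz : z ∈ unitDisc) :
    0 < ‖u - z‖ := by
  have : u ≠ z := fun h => by
    rw [h] at hu; exact absurd hu (ne_of_lt hz)
  simpa [sub_ne_zero.mpr this] using (norm_pos_iff.mpr (sub_ne_zero.mpr this))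

lemma gap_ineq {b : ℕ} {T : Set ℂ} {u z : ℂ} (hu : ‖u‖ = 1)
    (hgap : u ∉ GamStar b T) (hz : z ∈ T) (hzD : z ∈ unitDisc) :
    (1 + (b : ℝ)) * (1 - ‖z‖) ≤ ‖u - z‖ := by
  have hpos : 0 < ‖u - z‖ := circle_sub_disc_pos hu hzD
  by_contra h
  push_neg at h
  refine hgap ⟨hu, z, ⟨hzD, ?_⟩, hz⟩
  rw [tau, div_lt_div_iff₀ (by positivity) hpos]
  nlinarith

lemma germ_restrict {A S : Set ℂ} {w : ℂ} {r0 r : ℝ}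
    (h : A ∩ ball w r0 = S ∩ ball w r0) (hr : r ≤ r0) :
    A ∩ ball w r = S ∩ ball w r := by
  have hb : ball w r ⊆ ball w r0 := ball_subset_ball hr
  have h1 : ball w r0 ∩ ball w r = ball w r := inter_eq_self_of_subset_right hb
  calc A ∩ ball w r = (A ∩ ball w r0) ∩ ball w r := by rw [inter_assoc, h1]
    _ = (S ∩ ball w r0) ∩ ball w r := by rw [h]
    _ = S ∩ ball w r := by rw [inter_assoc, h1]

lemma gamStar_mono {b : ℕ} {U V : Set ℂ} (h : U ⊆ V) : GamStar b U ⊆ GamStar b V := by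
  rintro u ⟨h1, z, hz1, hz2⟩
  exact ⟨h1, z, hz1, h hz2⟩

lemma adjacent_mono {S T : Set ℂ} {w : ℂ} (h : S ⊆ T) (hS : Adjacent S w) :
    Adjacent T w := by
  obtain ⟨J, hJ, hJS⟩ := hS
  exact ⟨J, hJ, hJS.trans h⟩

lemma exists_gap {b : ℕ} {w : ℂ} {T : Set ℂ} (h : ¬ Adjacent (GamStar b T) w)
    {θ0 : ℝ} (hθ0 : 0 < θ0) :
    (∃ α : ℝ, 0 < α ∧ α < θ0 ∧ w * Complex.exp (α * Complex.I) ∉ GamStar b T) ∧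
    (∃ β : ℝ, 0 < β ∧ β < θ0 ∧ w * Complex.exp (-(β * Complex.I)) ∉ GamStar b T) := by
  have hpi : (0:ℝ) < Real.pi := Real.pi_pos
  set θ : ℝ := min θ0 Real.pi with hθdef
  have hθpos : 0 < θ := lt_min hθ0 hpi
  have hθle : θ ≤ 2 * Real.pi := (min_le_right _ _).trans (by linarith)
  constructor
  · by_contra hno
    push_neg at hno
    refine h ⟨(fun α : ℝ => w * Complex.exp (α * Complex.I)) '' Ioo 0 θ,
      ⟨θ, hθpos, hθle, Or.inl rfl⟩, ?_⟩
    rintro x ⟨α, ⟨hα0, hαθ⟩, rfl⟩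
    exact hno α hα0 (lt_of_lt_of_le hαθ (min_le_left _ _))
  · by_contra hno
    push_neg at hno
    refine h ⟨(fun α : ℝ => w * Complex.exp (-(α * Complex.I))) '' Ioo 0 θ,
      ⟨θ, hθpos, hθle, Or.inr rfl⟩, ?_⟩
    rintro x ⟨α, ⟨hα0, hαθ⟩, rfl⟩
    exact hno α hα0 (lt_of_lt_of_le hαθ (min_le_left _ _))

lemma mul_conj_one {w : ℂ} (hw : ‖w‖ = 1) : w * (starRingEnd ℂ) w = 1 := by
  rw [Complex.mul_conj, Complex.normSq_eq_norm_sq, hw]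
  norm_num

lemma abs_mul_conj_sub_one {w : ℂ} (hw : ‖w‖ = 1) (z : ℂ) :
    ‖z * (starRingEnd ℂ) w - 1‖ = ‖z - w‖ := by
  have h : z * (starRingEnd ℂ) w - 1 = (z - w) * (starRingEnd ℂ) w := by
    rw [sub_mul, mul_conj_one hw]
  rw [h, norm_mul, Complex.norm_conj, hw, mul_one]

lemma abs_conj_mul {w : ℂ} (hw : ‖w‖ = 1) (z : ℂ) :
    ‖z * (starRingEnd ℂ) w‖ = ‖z‖ := by
  rw [norm_mul, Complex.norm_conj, hw, mul_one]

lemma attached_projAdjacent (w : ℂ) (hw : w ∈ unitCircle) (A : Set ℂ)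
    (hAD : A ⊆ unitDisc) (hwcl : w ∈ closure A) (hatt : Attached w A) :
    ProjAdjacent w A := by
  obtain ⟨S, hSD, hconn, r0, hr0, hgerm⟩ := hatt
  have hw1 : ‖w‖ = 1 := hw
  by_cases hcase : ∀ ρ, 0 < ρ → ∃ z, z ∈ S ∩ ball w ρ ∧ 1/3 < tau w z
  · -- nontangential case
    refine ⟨2, fun r hr => ?_⟩
    set r' : ℝ := min r r0 with hr'def
    have hr'pos : 0 < r' := lt_min hr hr0
    have hAS : A ∩ ball w r' = S ∩ ball w r' := germ_restrict hgerm (min_le_right _ _)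
    refine adjacent_mono (gamStar_mono (inter_subset_inter_right _
      (ball_subset_ball (min_le_left r r0)))) ?_
    by_contra hno
    obtain ⟨z, hzSb, hz3⟩ := hcase r' hr'pos
    have hzD : z ∈ unitDisc := hSD hzSb.1
    have hzA : z ∈ A ∩ ball w r' := by rw [hAS]; exact hzSb
    have hwz : 0 < ‖w - z‖ := circle_sub_disc_pos hw1 hzD
    have hzlt : ‖w - z‖ < 3 * (1 - ‖z‖) := by
      rw [tau, div_lt_div_iff₀ (by norm_num) hwz] at hz3
      linarith
    set ε : ℝ := (3 * (1 - ‖z‖) - ‖w - z‖) / 2 with hεdef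
    have hεpos : 0 < ε := by simp only [hεdef]; linarith
    obtain ⟨⟨α, hα0, hαε, hgap⟩, -⟩ := exists_gap hno hεpos
    set u : ℂ := w * Complex.exp (α * Complex.I) with hudef
    have hu1 : ‖u‖ = 1 := by
      rw [hudef, norm_mul, hw1, Complex.norm_exp_ofReal_mul_I, one_mul]
    have h1 := gap_ineq hu1 hgap hzA hzD
    have h2 : ‖u - w‖ ≤ α := by
      have : u - w = w * (Complex.exp (α * Complex.I) - 1) := by rw [hudef]; ring
      rw [this, norm_mul, hw1, one_mul]
      exact (abs_exp_I_sub_one_le α).trans (le_of_eq (abs_of_pos hα0))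
    have h3 : ‖u - z‖ ≤ ‖u - w‖ + ‖w - z‖ := by
      have : u - z = (u - w) + (w - z) := by ring
      rw [this]; exact norm_add_le _ _
    have : (1 + ((2:ℕ):ℝ)) = 3 := by norm_num
    rw [this] at h1
    simp only [hεdef] at hαε
    linarith
  · -- tangential case
    push_neg at hcase
    obtain ⟨r1, hr1pos, hr1⟩ := hcase
    refine ⟨2, fun r hr => ?_⟩
    set r' : ℝ := min (min r r0) (min r1 4⁻¹) with hr'def
    have hr'pos : 0 < r' := lt_min (lt_min hr hr0) (lt_min hr1pos (by norm_num))
    have hr'r : r' ≤ r := (min_le_left _ _).trans (min_le_left _ _)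
    have hr'r0 : r' ≤ r0 := (min_le_left _ _).trans (min_le_right _ _)
    have hr'r1 : r' ≤ r1 := (min_le_right _ _).trans (min_le_left _ _)
    have hr'4 : r' ≤ 4⁻¹ := (min_le_right _ _).trans (min_le_right _ _)
    have hAS : A ∩ ball w r' = S ∩ ball w r' := germ_restrict hgerm hr'r0
    refine adjacent_mono (gamStar_mono (inter_subset_inter_right _
      (ball_subset_ball hr'r))) ?_
    by_contra hno
    -- base point z0
    obtain ⟨z0, hz0A, hz0d⟩ : ∃ z0, z0 ∈ A ∧ dist w z0 < r' := by
      obtain ⟨z0, hz0A, hz0d⟩ := Metric.mem_closure_iff.1 hwcl r' hr'pos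
      exact ⟨z0, hz0A, hz0d⟩
    have hz0b : z0 ∈ ball w r' := by rwa [mem_ball, dist_comm]
    have hz0Sb : z0 ∈ S ∩ ball w r' := by rw [← hAS]; exact ⟨hz0A, hz0b⟩
    have hz0S : z0 ∈ S := hz0Sb.1
    have hz0D : z0 ∈ unitDisc := hAD hz0A
    set d : ℝ := ‖z0 - w‖ with hddef
    have hd0 : 0 < d := by
      refine norm_pos_iff.mpr (sub_ne_zero.mpr fun h => ?_)
      rw [h] at hz0D; exact absurd hw1 (ne_of_lt hz0D)
    have hdr' : d < r' := by rwa [mem_ball, Complex.dist_eq] at hz0b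
    -- gaps
    obtain ⟨⟨α, hα0, hαlt, hgapR⟩, ⟨β, hβ0, hβlt, hgapL⟩⟩ :=
      exists_gap hno (show (0:ℝ) < d/8 by linarith)
    set γ : ℝ := α + β with hγdef
    have hγ0 : 0 < γ := by positivity
    have hγd : 3 * γ < d := by simp only [hγdef]; linarith
    -- the angle function
    set g : ℂ → ℝ := fun z => Complex.arg (z * (starRingEnd ℂ) w) with hgdef
    -- shell estimate
    have shell : ∀ z ∈ S ∩ ball w r', 3 * (1 - ‖z‖) ≤ ‖z - w‖ := by
      rintro z ⟨hzS, hzb⟩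
      have hzb1 : z ∈ ball w r1 := ball_subset_ball hr'r1 hzb
      have htau := hr1 z ⟨hzS, hzb1⟩
      have hzD : z ∈ unitDisc := hSD hzS
      have hwz : 0 < ‖w - z‖ := circle_sub_disc_pos hw1 hzD
      rw [tau, div_le_iff₀ hwz] at htau
      have habs : ‖w - z‖ = ‖z - w‖ :=
        norm_sub_rev w z
      rw [habs] at htau
      linarith
    -- F5 : points of S in the ball have angle comparable to distance
    have F5 : ∀ z ∈ S ∩ ball w r', 2 * ‖z - w‖ ≤ 3 * |g z| := by
      rintro z ⟨hzS, hzb⟩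
      have hzD : z ∈ unitDisc := hSD hzS
      have ht1 : ‖z‖ < 1 := hzD
      set ζ : ℂ := z * (starRingEnd ℂ) w with hζdef
      have hζabs : ‖ζ‖ = ‖z‖ := abs_conj_mul hw1 z
      have hζeq : (↑(‖z‖) : ℂ) * Complex.exp (g z * Complex.I) = ζ := by
        rw [hgdef]
        simpa [hζabs] using Complex.norm_mul_exp_arg_mul_I ζ
      have h1 : ‖ζ - Complex.exp (g z * Complex.I)‖ = 1 - ‖z‖ := by
        have : ζ - Complex.exp (g z * Complex.I)
            = ((↑(‖z‖) : ℂ) - 1) * Complex.exp (g z * Complex.I) := by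
          rw [← hζeq]; ring
        rw [this, norm_mul, Complex.norm_exp_ofReal_mul_I, mul_one]
        rw [← Complex.ofReal_one, ← Complex.ofReal_sub, Complex.norm_real, Real.norm_eq_abs]
        rw [abs_of_nonpos (by linarith)]
        ring
      have h2 : ‖ζ - 1‖ ≤ (1 - ‖z‖) + |g z| := by
        calc ‖ζ - 1‖
            ≤ ‖ζ - Complex.exp (g z * Complex.I)‖
              + ‖Complex.exp (g z * Complex.I) - 1‖ := by
              have : ζ - 1 = (ζ - Complex.exp (g z * Complex.I))
                + (Complex.exp (g z * Complex.I) - 1) := by ring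
              rw [this]; exact norm_add_le _ _
          _ ≤ (1 - ‖z‖) + |g z| := by
              rw [h1]; exact add_le_add le_rfl (abs_exp_I_sub_one_le _)
      have h3 : ‖ζ - 1‖ = ‖z - w‖ := abs_mul_conj_sub_one hw1 z
      have h4 := shell z ⟨hzS, hzb⟩
      rw [h3] at h2
      linarith
    -- ray exclusion
    have rayex : ∀ θ : ℝ, w * Complex.exp ((θ:ℂ) * Complex.I) ∉ GamStar 2 (A ∩ ball w r') →
        ∀ z ∈ S ∩ ball w r', g z ≠ θ := by
      rintro θ hgap z ⟨hzS, hzb⟩ hgz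
      have hzD : z ∈ unitDisc := hSD hzS
      have ht1 : ‖z‖ < 1 := hzD
      set ζ : ℂ := z * (starRingEnd ℂ) w with hζdef
      have hζabs : ‖ζ‖ = ‖z‖ := abs_conj_mul hw1 z
      have hζeq : (↑(‖z‖) : ℂ) * Complex.exp ((θ:ℂ) * Complex.I) = ζ := by
        have := Complex.norm_mul_exp_arg_mul_I ζ
        rwa [hζabs, show Complex.arg ζ = θ from hgz] at this
      set u : ℂ := w * Complex.exp ((θ:ℂ) * Complex.I) with hudef
      have hu1 : ‖u‖ = 1 := by
        rw [hudef, norm_mul, hw1, Complex.norm_exp_ofReal_mul_I, one_mul]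
      have huz : ‖u - z‖ = 1 - ‖z‖ := by
        have hwζ : w * ζ = z := by
          rw [hζdef]
          calc w * (z * (starRingEnd ℂ) w) = z * (w * (starRingEnd ℂ) w) := by ring
            _ = z := by rw [mul_conj_one hw1, mul_one]
        have : u - z = w * ((1 - (↑(‖z‖) : ℂ)) * Complex.exp ((θ:ℂ) * Complex.I)) := by
          have e1 : w * ((1 - (↑(‖z‖) : ℂ)) * Complex.exp ((θ:ℂ) * Complex.I))
              = w * Complex.exp ((θ:ℂ) * Complex.I)
                - w * ((↑(‖z‖) : ℂ) * Complex.exp ((θ:ℂ) * Complex.I)) := by ring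
          rw [hζeq, hwζ, ← hudef] at e1
          exact e1.symm
        rw [this, norm_mul, hw1, one_mul, norm_mul, Complex.norm_exp_ofReal_mul_I, mul_one]
        rw [← Complex.ofReal_one, ← Complex.ofReal_sub, Complex.norm_real, Real.norm_eq_abs]
        exact abs_of_nonneg (by linarith)
      refine hgap ⟨hu1, z, ⟨hzD, ?_⟩, by rw [hAS]; exact ⟨hzS, hzb⟩⟩
      rw [tau, huz]
      rw [div_self (by linarith : (1:ℝ) - ‖z‖ ≠ 0)]
      norm_num
    have F1 : ∀ z ∈ S ∩ ball w r', g z ≠ α := rayex α hgapR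
    have F2 : ∀ z ∈ S ∩ ball w r', g z ≠ -β := by
      refine rayex (-β) ?_
      have : ((-β : ℝ) : ℂ) * Complex.I = -((β:ℝ) * Complex.I) := by push_cast; ring
      rwa [this]
    -- continuity of the angle function
    have hcont : ContinuousOn g (ball w 2⁻¹) := by
      intro z hz
      have hd : ‖z * (starRingEnd ℂ) w - 1‖ < 2⁻¹ := by
        rw [abs_mul_conj_sub_one hw1, ← Complex.dist_eq]
        exact mem_ball.1 hz
      have hre : 0 < (z * (starRingEnd ℂ) w).re := by
        have h1 : (1 - z * (starRingEnd ℂ) w).re ≤ ‖1 - z * (starRingEnd ℂ) w‖ :=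
          Complex.re_le_norm _
        have h2 : ‖1 - z * (starRingEnd ℂ) w‖
            = ‖z * (starRingEnd ℂ) w - 1‖ := norm_sub_rev _ _
        have h3 : (1 - z * (starRingEnd ℂ) w).re = 1 - (z * (starRingEnd ℂ) w).re := by
          simp [Complex.sub_re]
        rw [h2] at h1
        rw [h3] at h1
        linarith
      have hmul : ContinuousAt (fun y : ℂ => y * (starRingEnd ℂ) w) z :=
        (continuous_mul_right _).continuousAt
      exact (ContinuousAt.comp (f := fun y : ℂ => y * (starRingEnd ℂ) w) (x := z)
        (Complex.continuousAt_arg (Or.inl hre)) hmul).continuousWithinAt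
    have hgw0 : g w = 0 := by
      simp only [hgdef, mul_conj_one hw1, Complex.arg_one]
    -- the open sets
    have h3γr' : 3 * γ < r' := by linarith
    have h3γhalf : 3 * γ ≤ 2⁻¹ := by linarith
    have hr'half : r' ≤ 2⁻¹ := by linarith
    set U : Set ℂ := ball w (3*γ) ∩ g ⁻¹' (Ioo (-β) α) with hUdef
    set V : Set ℂ := (closedBall w (2*γ))ᶜ ∪
      ((ball w r' ∩ g ⁻¹' (Ioi α)) ∪ (ball w r' ∩ g ⁻¹' (Iio (-β)))) with hVdef
    have hUopen : IsOpen U :=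
      (hcont.mono (ball_subset_ball h3γhalf)).isOpen_inter_preimage isOpen_ball isOpen_Ioo
    have hVopen : IsOpen V := by
      refine IsOpen.union Metric.isClosed_closedBall.isOpen_compl (IsOpen.union ?_ ?_)
      · exact (hcont.mono (ball_subset_ball hr'half)).isOpen_inter_preimage isOpen_ball isOpen_Ioi
      · exact (hcont.mono (ball_subset_ball hr'half)).isOpen_inter_preimage isOpen_ball isOpen_Iio
    -- cover
    have hcover : insert w S ⊆ U ∪ V := by
      intro z hz
      by_cases h2γ : z ∈ closedBall w (2*γ)
      · have hzd : dist z w ≤ 2*γ := mem_closedBall.1 h2γ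
        have hzb : z ∈ ball w r' := mem_ball.2 (lt_of_le_of_lt hzd (by linarith))
        have hzb3 : z ∈ ball w (3*γ) := mem_ball.2 (lt_of_le_of_lt hzd (by linarith))
        rcases mem_insert_iff.1 hz with rfl | hzS
        · exact Or.inl ⟨hzb3, by rw [mem_preimage, hgw0]; exact ⟨by linarith, hα0⟩⟩
        · rcases lt_trichotomy (g z) α with hlt | heq | hgt
          · rcases lt_trichotomy (g z) (-β) with h2 | h2 | h2
            · exact Or.inr (Or.inr (Or.inr ⟨hzb, h2⟩))
            · exact (F2 z ⟨hzS, hzb⟩ h2).elim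
            · exact Or.inl ⟨hzb3, ⟨h2, hlt⟩⟩
          · exact (F1 z ⟨hzS, hzb⟩ heq).elim
          · exact Or.inr (Or.inr (Or.inl ⟨hzb, hgt⟩))
      · exact Or.inr (Or.inl h2γ)
    -- the two sides are inhabited
    have hUw : w ∈ U := ⟨mem_ball_self (by linarith),
      by rw [mem_preimage, hgw0]; exact ⟨by linarith, hα0⟩⟩
    have hVz0 : z0 ∈ V := by
      refine Or.inl ?_
      intro hmem
      have : dist z0 w ≤ 2*γ := mem_closedBall.1 hmem
      rw [Complex.dist_eq] at this
      rw [← hddef] at this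
      linarith
    obtain ⟨z, hzC, hzU, hzV⟩ := hconn.isPreconnected U V hUopen hVopen hcover
      ⟨w, mem_insert _ _, hUw⟩ ⟨z0, mem_insert_of_mem _ hz0S, hVz0⟩
    obtain ⟨hzb3, hθ⟩ := hzU
    have hθ1 : -β < g z := hθ.1
    have hθ2 : g z < α := hθ.2
    rcases hzV with hV1 | hV2 | hV3
    · have hz2γ : 2*γ < dist z w := by
        by_contra hle
        exact hV1 (mem_closedBall.2 (not_lt.1 hle))
      have hzw : z ≠ w := by
        intro h
        rw [h, dist_self] at hz2γ
        linarith
      have hzS : z ∈ S := (mem_insert_iff.1 hzC).resolve_left hzw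
      have hzb' : z ∈ ball w r' := ball_subset_ball (le_of_lt h3γr') hzb3
      have h5 := F5 z ⟨hzS, hzb'⟩
      have hgabs : |g z| ≤ γ := abs_le.2 ⟨by linarith, by linarith⟩
      rw [Complex.dist_eq] at hz2γ
      linarith
    · have h2 : α < g z := hV2.2
      linarith
    · have h3 : g z < -β := hV3.2
      linarith

/-! Part 2 : the sequential example -/

def phi2 : ℕ → ℂ := fun n => ((1 - ((n:ℝ)+2)⁻¹ : ℝ) : ℂ)

lemma phi2_abs (n : ℕ) : ‖phi2 n‖ = 1 - ((n:ℝ)+2)⁻¹ := by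
  have h2 : (0:ℝ) < (n:ℝ) + 2 := by positivity
  have hinv : ((n:ℝ)+2)⁻¹ ≤ 2⁻¹ := by
    apply inv_anti₀ (by norm_num)
    have : (0:ℝ) ≤ (n:ℝ) := Nat.cast_nonneg n
    linarith
  rw [phi2, Complex.norm_real, Real.norm_eq_abs]
  exact abs_of_nonneg (by linarith)

lemma phi2_inv_pos (n : ℕ) : (0:ℝ) < ((n:ℝ)+2)⁻¹ := by positivity

lemma phi2_inv_le_half (n : ℕ) : ((n:ℝ)+2)⁻¹ ≤ 2⁻¹ := by
  apply inv_anti₀ (by norm_num)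
  have : (0:ℝ) ≤ (n:ℝ) := Nat.cast_nonneg n
  linarith

lemma phi2_disc (n : ℕ) : phi2 n ∈ unitDisc := by
  have := phi2_inv_pos n
  show ‖phi2 n‖ < 1
  rw [phi2_abs]; linarith

lemma phi2_sub_one (n : ℕ) : ‖phi2 n - 1‖ = ((n:ℝ)+2)⁻¹ := by
  have h : phi2 n - 1 = ((-(((n:ℝ)+2)⁻¹) : ℝ) : ℂ) := by
    rw [phi2]; push_cast; ring
  rw [h, Complex.norm_real, Real.norm_eq_abs, abs_neg]
  exact abs_of_nonneg (le_of_lt (phi2_inv_pos n))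

lemma exists_phi2_lt {ε : ℝ} (hε : 0 < ε) : ∃ n : ℕ, ((n:ℝ)+2)⁻¹ < ε := by
  obtain ⟨n, hn⟩ := exists_nat_gt ε⁻¹
  refine ⟨n, ?_⟩
  have h1 : ε⁻¹ < (n:ℝ) + 2 := by linarith [hn]
  have h2 : (0:ℝ) < ε⁻¹ := by positivity
  calc ((n:ℝ)+2)⁻¹ < (ε⁻¹)⁻¹ := by
        apply inv_strictAnti₀ h2 h1
    _ = ε := inv_inv ε

lemma phi2_closure : (1:ℂ) ∈ closure (Set.range phi2) := by
  rw [Metric.mem_closure_iff]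
  intro ε hε
  obtain ⟨n, hn⟩ := exists_phi2_lt hε
  refine ⟨phi2 n, mem_range_self n, ?_⟩
  rw [Complex.dist_eq]
  have : ‖1 - phi2 n‖ = ‖phi2 n - 1‖ :=
    norm_sub_rev _ _
  rw [this, phi2_sub_one]
  exact hn

lemma phi2_tendsto : Tendsto phi2 atTop (nhds 1) := by
  rw [tendsto_iff_dist_tendsto_zero]
  have h : ∀ n : ℕ, dist (phi2 n) 1 = ((n:ℝ)+2)⁻¹ := fun n => by
    rw [Complex.dist_eq, phi2_sub_one]
  simp only [h]
  have : Tendsto (fun n : ℕ => ((n:ℝ)+2)⁻¹) atTop (nhds 0) :=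
    Tendsto.comp tendsto_inv_atTop_zero
      (tendsto_atTop_add_const_right atTop 2 tendsto_natCast_atTop_atTop)
  exact this

lemma phi2_projAdjacent : ProjAdjacent 1 (Set.range phi2) := by
  refine ⟨2, fun r hr => ?_⟩
  obtain ⟨n, hn⟩ := exists_phi2_lt hr
  set δ : ℝ := ((n:ℝ)+2)⁻¹ with hδdef
  have hδ0 : 0 < δ := phi2_inv_pos n
  have hδhalf : δ ≤ 2⁻¹ := phi2_inv_le_half n
  have hπ : (3:ℝ) < Real.pi := Real.pi_gt_three
  refine ⟨(fun α : ℝ => 1 * Complex.exp (α * Complex.I)) '' Ioo 0 δ,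
    ⟨δ, hδ0, by linarith, Or.inl rfl⟩, ?_⟩
  rintro x ⟨α, ⟨hα0, hαδ⟩, rfl⟩
  have hu1 : ‖1 * Complex.exp ((α:ℝ) * Complex.I)‖ = 1 := by
    rw [one_mul, Complex.norm_exp_ofReal_mul_I]
  refine ⟨hu1, phi2 n, ⟨phi2_disc n, ?_⟩, mem_range_self n, ?_⟩
  · -- tau estimate
    have hpos : 0 < ‖1 * Complex.exp ((α:ℝ) * Complex.I) - phi2 n‖ :=
      circle_sub_disc_pos hu1 (phi2_disc n)
    have hub : ‖1 * Complex.exp ((α:ℝ) * Complex.I) - phi2 n‖ ≤ α + δ := by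
      have h1 : (1:ℂ) * Complex.exp ((α:ℝ) * Complex.I) - phi2 n
          = (Complex.exp ((α:ℝ) * Complex.I) - 1) + (1 - phi2 n) := by ring
      rw [h1]
      calc ‖_‖ ≤ ‖Complex.exp ((α:ℝ) * Complex.I) - 1‖
            + ‖1 - phi2 n‖ := norm_add_le _ _
        _ ≤ α + δ := by
            have ha := abs_exp_I_sub_one_le α
            rw [abs_of_pos hα0] at ha
            have hb : ‖1 - phi2 n‖ = δ := by
              rw [norm_sub_rev, phi2_sub_one]
            linarith
    rw [tau, phi2_abs, ← hδdef]
    rw [div_lt_div_iff₀ (by norm_num) hpos]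
    push_cast
    nlinarith [hub]
  · -- ball membership
    rw [mem_ball, Complex.dist_eq, phi2_sub_one]
    exact hn

lemma phi2_not_attached : ¬ Attached 1 (Set.range phi2) := by
  rintro ⟨S, hSD, hconn, r0, hr0, hgerm⟩
  -- a point of S close to 1
  obtain ⟨z0, hz0A, hz0d⟩ := Metric.mem_closure_iff.1 phi2_closure r0 hr0
  have hz0b : z0 ∈ ball 1 r0 := by rwa [mem_ball, dist_comm]
  have hz0S : z0 ∈ S := by
    have : z0 ∈ S ∩ ball 1 r0 := by rw [← hgerm]; exact ⟨hz0A, hz0b⟩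
    exact this.1
  have hz0D : z0 ∈ unitDisc := hSD hz0S
  set d : ℝ := dist z0 1 with hddef
  have hd0 : 0 < d := by
    rw [hddef, dist_pos]
    intro h
    rw [h] at hz0D
    have : ‖(1:ℂ)‖ < 1 := hz0D
    simp at this
  have hdr0 : d < r0 := by rwa [mem_ball] at hz0b
  -- intermediate value
  set f : ℂ → ℝ := fun z => dist z 1 with hfdef
  have hf1 : f 1 = 0 := dist_self 1
  have hIcc : Icc (f 1) (f z0) ⊆ f '' insert 1 S :=
    hconn.isPreconnected.intermediate_value (mem_insert 1 S)
      (mem_insert_of_mem _ hz0S) ((continuous_id.dist continuous_const).continuousOn)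
  have hsub : Ioo (0:ℝ) d ⊆ f '' (Set.range phi2 ∩ ball 1 r0) := by
    intro s hs
    have hs' : s ∈ Icc (f 1) (f z0) := by
      rw [hf1]; exact ⟨hs.1.le, hs.2.le⟩
    obtain ⟨z, hzC, hfz⟩ := hIcc hs'
    have hz1 : z ≠ 1 := by
      intro h
      rw [h, hf1] at hfz
      exact absurd hfz.symm (ne_of_gt hs.1)
    have hzS : z ∈ S := (mem_insert_iff.1 hzC).resolve_left hz1
    have hzb : z ∈ ball 1 r0 := by
      rw [mem_ball]
      calc dist z 1 = s := hfz
        _ < d := hs.2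
        _ < r0 := hdr0
    refine ⟨z, ?_, hfz⟩
    rw [hgerm]; exact ⟨hzS, hzb⟩
  have hcnt : (Ioo (0:ℝ) d).Countable :=
    Set.Countable.mono hsub (((countable_range phi2).mono inter_subset_left).image f)
  have hbig := Cardinal.mk_Ioo_real hd0
  have hle := hcnt.le_aleph0
  rw [hbig] at hle
  exact absurd hle (not_le.2 Cardinal.aleph0_lt_continuum)

theorem stmt14 :
    (∀ w : ℂ, w ∈ unitCircle → ∀ A : Set ℂ, A ⊆ unitDisc → w ∈ closure A →
      Attached w A → ProjAdjacent w A) ∧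
    (∃ A : Set ℂ, A ⊆ unitDisc ∧ (1:ℂ) ∈ closure A ∧ SeqEnding 1 A ∧
      ProjAdjacent 1 A ∧ ¬ Attached 1 A) := by
  constructor
  · exact attached_projAdjacent
  · refine ⟨Set.range phi2, ?_, phi2_closure,
      ⟨phi2, phi2_disc, phi2_tendsto, ⟨1, one_pos, rfl⟩⟩,
      phi2_projAdjacent, phi2_not_attached⟩
    rintro _ ⟨n, rfl⟩
    exact phi2_disc n
end
end

section
/- Endow the set of approach regions ending at w ∈ ∂D with the topology generated by the subbase of sets O(A,r) = {A' : A' ⊇ A ∩ B(w,r)} for approach regions A and r > 0. Then the function A ↦ A^♮ = inf_{r>0} sup_{z∈A∩B(w,r)} τ(w,z) is lower semicontinuous, and the function A ↦ A_♮ = sup_{r>0} inf_{z∈A∩B(w,r)} τ(w,z) is upper semicontinuous with respect to this topology. -/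
open Metric Set

noncomputable section

/-- `A_♮ = sup_{r>0} inf_{z ∈ A ∩ B(w,r)} τ(w,z)` -/
def lowTau (w : ℂ) (A : Set ℂ) : ℝ :=
  sSup ((fun r => sInf (tau w '' (A ∩ ball w r))) '' Ioi (0:ℝ))

/-- The approach regions ending at `w`. -/
def AR (w : ℂ) := {A : Set ℂ // A ⊆ unitDisc ∧ w ∈ closure A}

/-- The rough topology on the approach regions ending at `w`: generated by the
subbase of sets `O(A,r) = {A' : A' ⊇ A ∩ B(w,r)}`. -/
def roughTopology (w : ℂ) : TopologicalSpace (AR w) :=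
  TopologicalSpace.generateFrom
    {O | ∃ B : AR w, ∃ r : ℝ, 0 < r ∧ O = {A' : AR w | B.1 ∩ ball w r ⊆ A'.1}}

namespace Aux15

lemma inter_ball_nonempty (w : ℂ) (A : AR w) {r : ℝ} (hr : 0 < r) :
    (A.1 ∩ ball w r).Nonempty := by
  rcases Metric.mem_closure_iff.1 A.2.2 r hr with ⟨z, hz, hd⟩
  exact ⟨z, hz, by simpa [mem_ball, dist_comm] using hd⟩

lemma tau_mem (w : ℂ) (hw : ‖w‖ = 1) {z : ℂ} (hz : z ∈ unitDisc) :
    tau w z ∈ Icc (0:ℝ) 1 := by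
  have hzlt : ‖z‖ < 1 := hz
  have hle : 1 - ‖z‖ ≤ ‖w - z‖ := by
    have := norm_sub_norm_le w z
    simpa [hw] using this
  have hpos : 0 < ‖w - z‖ := by linarith
  constructor
  · exact div_nonneg (by linarith) hpos.le
  · rw [tau, div_le_one hpos]; exact hle

lemma img_subset (w : ℂ) (hw : ‖w‖ = 1) (A : AR w) (r : ℝ) :
    tau w '' (A.1 ∩ ball w r) ⊆ Icc (0:ℝ) 1 := by
  rintro x ⟨z, ⟨hzA, _⟩, rfl⟩
  exact tau_mem w hw (A.2.1 hzA)

lemma img_bddAbove (w : ℂ) (hw : ‖w‖ = 1) (A : AR w) (r : ℝ) :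
    BddAbove (tau w '' (A.1 ∩ ball w r)) :=
  ⟨1, fun x hx => (img_subset w hw A r hx).2⟩

lemma img_bddBelow (w : ℂ) (hw : ‖w‖ = 1) (A : AR w) (r : ℝ) :
    BddBelow (tau w '' (A.1 ∩ ball w r)) :=
  ⟨0, fun x hx => (img_subset w hw A r hx).1⟩

lemma img_nonempty (w : ℂ) (A : AR w) {r : ℝ} (hr : 0 < r) :
    (tau w '' (A.1 ∩ ball w r)).Nonempty :=
  (inter_ball_nonempty w A hr).image _

lemma outerHigh_bddBelow (w : ℂ) (hw : ‖w‖ = 1) (A : AR w) :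
    BddBelow ((fun r => sSup (tau w '' (A.1 ∩ ball w r))) '' Ioi (0:ℝ)) := by
  refine ⟨0, ?_⟩
  rintro x ⟨r, hr, rfl⟩
  obtain ⟨y, hy⟩ := img_nonempty w A hr
  calc (0:ℝ) ≤ y := (img_subset w hw A r hy).1
    _ ≤ _ := le_csSup (img_bddAbove w hw A r) hy

lemma outerLow_bddAbove (w : ℂ) (hw : ‖w‖ = 1) (A : AR w) :
    BddAbove ((fun r => sInf (tau w '' (A.1 ∩ ball w r))) '' Ioi (0:ℝ)) := by
  refine ⟨1, ?_⟩
  rintro x ⟨r, hr, rfl⟩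
  obtain ⟨y, hy⟩ := img_nonempty w A hr
  calc sInf (tau w '' (A.1 ∩ ball w r)) ≤ y := csInf_le (img_bddBelow w hw A r) hy
    _ ≤ 1 := (img_subset w hw A r hy).2

lemma sub_img (w : ℂ) (A A' : AR w) {r₀ r : ℝ}
    (h : A.1 ∩ ball w r₀ ⊆ A'.1) :
    tau w '' (A.1 ∩ ball w (min r r₀)) ⊆ tau w '' (A'.1 ∩ ball w r) := by
  apply image_mono
  rintro z ⟨hzA, hzb⟩
  exact ⟨h ⟨hzA, ball_subset_ball (min_le_right _ _) hzb⟩,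
    ball_subset_ball (min_le_left _ _) hzb⟩

lemma high_mono (w : ℂ) (hw : ‖w‖ = 1) (A A' : AR w) {r₀ : ℝ} (hr₀ : 0 < r₀)
    (h : A.1 ∩ ball w r₀ ⊆ A'.1) : highTau w A.1 ≤ highTau w A'.1 := by
  apply le_csInf ((nonempty_Ioi.image _))
  rintro b ⟨r, hr, rfl⟩
  have hr' : 0 < r := hr
  have hmin : 0 < min r r₀ := lt_min hr' hr₀
  calc highTau w A.1 ≤ sSup (tau w '' (A.1 ∩ ball w (min r r₀))) :=
        csInf_le (outerHigh_bddBelow w hw A) ⟨min r r₀, hmin, rfl⟩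
    _ ≤ sSup (tau w '' (A'.1 ∩ ball w r)) :=
        csSup_le_csSup (img_bddAbove w hw A' r) (img_nonempty w A hmin) (sub_img w A A' h)

lemma low_mono (w : ℂ) (hw : ‖w‖ = 1) (A A' : AR w) {r₀ : ℝ} (hr₀ : 0 < r₀)
    (h : A.1 ∩ ball w r₀ ⊆ A'.1) : lowTau w A'.1 ≤ lowTau w A.1 := by
  apply csSup_le ((nonempty_Ioi.image _))
  rintro b ⟨r, hr, rfl⟩
  have hr' : 0 < r := hr
  have hmin : 0 < min r r₀ := lt_min hr' hr₀
  calc sInf (tau w '' (A'.1 ∩ ball w r)) ≤ sInf (tau w '' (A.1 ∩ ball w (min r r₀))) :=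
        csInf_le_csInf (img_bddBelow w hw A' r) (img_nonempty w A hmin) (sub_img w A A' h)
    _ ≤ lowTau w A.1 := le_csSup (outerLow_bddAbove w hw A) ⟨min r r₀, hmin, rfl⟩

end Aux15

theorem stmt15 (w : ℂ) (hw : ‖w‖ = 1) :
    @LowerSemicontinuous (AR w) ℝ (roughTopology w) _
      (fun A : AR w => highTau w A.1) ∧
    @UpperSemicontinuous (AR w) ℝ (roughTopology w) _
      (fun A : AR w => lowTau w A.1) := by
  letI := roughTopology w
  have hU : ∀ A : AR w, @IsOpen (AR w) (roughTopology w)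
      {A' : AR w | A.1 ∩ ball w 1 ⊆ A'.1} :=
    fun A => TopologicalSpace.GenerateOpen.basic _ ⟨A, 1, one_pos, rfl⟩
  have hmemU : ∀ A : AR w, A ∈ {A' : AR w | A.1 ∩ ball w 1 ⊆ A'.1} :=
    fun A => fun z hz => hz.1
  constructor
  · intro A y hy
    filter_upwards [(hU A).mem_nhds (hmemU A)] with A' hA'
    exact lt_of_lt_of_le hy (Aux15.high_mono w hw A A' one_pos hA')
  · intro A y hy
    filter_upwards [(hU A).mem_nhds (hmemU A)] with A' hA'
    exact lt_of_le_of_lt (Aux15.low_mono w hw A A' one_pos hA') hy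
end
end

section
/- In the rough topology on the set of approach regions ending at w ∈ ∂D, the set of very oscillatory approach regions is open, the set of nontangential approach regions is closed with empty interior, and the set of tangential approach regions is closed with empty interior. -/
open Metric Set

noncomputable section

def NontangentialAt (w : ℂ) (A : Set ℂ) : Prop := 0 < lowTau w A
def VeryOscAt (w : ℂ) (A : Set ℂ) : Prop := lowTau w A = 0 ∧ 0 < highTau w A

namespace RoughAux

variable {w : ℂ}

lemma tau_pos (hw : ‖w‖ = 1) {z : ℂ} (hz : z ∈ unitDisc) : 0 < tau w z := by
  have hz1 : ‖z‖ < 1 := hz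
  have hne : w - z ≠ 0 := by
    intro h
    rw [sub_eq_zero] at h
    rw [← h, hw] at hz1
    exact lt_irrefl _ hz1
  exact div_pos (by linarith) (norm_pos_iff.mpr hne)

lemma tau_le_one (hw : ‖w‖ = 1) {z : ℂ} (hz : z ∈ unitDisc) : tau w z ≤ 1 := by
  have hz1 : ‖z‖ < 1 := hz
  have hne : w - z ≠ 0 := by
    intro h
    rw [sub_eq_zero] at h
    rw [← h, hw] at hz1
    exact lt_irrefl _ hz1
  have hsub : (1 : ℝ) - ‖z‖ ≤ ‖w - z‖ := by
    have := norm_sub_norm_le w z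
    simpa [hw] using this
  rw [tau, div_le_one (norm_pos_iff.mpr hne)]
  exact hsub

lemma inter_ball_ne (A : AR w) {r : ℝ} (hr : 0 < r) : (A.1 ∩ ball w r).Nonempty := by
  obtain ⟨z, hzA, hz⟩ := Metric.mem_closure_iff.mp A.2.2 r hr
  exact ⟨z, hzA, by rwa [mem_ball, dist_comm]⟩

lemma S_ne (A : AR w) {r : ℝ} (hr : 0 < r) : (tau w '' (A.1 ∩ ball w r)).Nonempty :=
  (inter_ball_ne A hr).image _

lemma S_nonneg (hw : ‖w‖ = 1) (A : AR w) (r : ℝ) :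
    ∀ x ∈ tau w '' (A.1 ∩ ball w r), 0 ≤ x := by
  rintro x ⟨z, ⟨hzA, _⟩, rfl⟩
  exact (tau_pos hw (A.2.1 hzA)).le

lemma S_le_one (hw : ‖w‖ = 1) (A : AR w) (r : ℝ) :
    ∀ x ∈ tau w '' (A.1 ∩ ball w r), x ≤ 1 := by
  rintro x ⟨z, ⟨hzA, _⟩, rfl⟩
  exact tau_le_one hw (A.2.1 hzA)

lemma S_bddBelow (hw : ‖w‖ = 1) (A : AR w) (r : ℝ) :
    BddBelow (tau w '' (A.1 ∩ ball w r)) := ⟨0, S_nonneg hw A r⟩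

lemma S_bddAbove (hw : ‖w‖ = 1) (A : AR w) (r : ℝ) :
    BddAbove (tau w '' (A.1 ∩ ball w r)) := ⟨1, S_le_one hw A r⟩

lemma f_nonneg (hw : ‖w‖ = 1) (A : AR w) (r : ℝ) :
    0 ≤ sInf (tau w '' (A.1 ∩ ball w r)) := Real.sInf_nonneg (S_nonneg hw A r)

lemma f_le_one (hw : ‖w‖ = 1) (A : AR w) {r : ℝ} (hr : 0 < r) :
    sInf (tau w '' (A.1 ∩ ball w r)) ≤ 1 := by
  obtain ⟨x, hx⟩ := S_ne A hr
  exact csInf_le_of_le (S_bddBelow hw A r) hx (S_le_one hw A r x hx)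

lemma g_le_one (hw : ‖w‖ = 1) (A : AR w) (r : ℝ) :
    sSup (tau w '' (A.1 ∩ ball w r)) ≤ 1 :=
  Real.sSup_le (S_le_one hw A r) zero_le_one

lemma g_nonneg (hw : ‖w‖ = 1) (A : AR w) (r : ℝ) :
    0 ≤ sSup (tau w '' (A.1 ∩ ball w r)) := Real.sSup_nonneg (S_nonneg hw A r)

lemma lowTau_nonneg (hw : ‖w‖ = 1) (A : AR w) : 0 ≤ lowTau w A.1 := by
  apply Real.sSup_nonneg
  rintro x ⟨r, hr, rfl⟩
  exact f_nonneg hw A r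

lemma highTau_nonneg (hw : ‖w‖ = 1) (A : AR w) : 0 ≤ highTau w A.1 := by
  apply Real.sInf_nonneg
  rintro x ⟨r, hr, rfl⟩
  exact g_nonneg hw A r

lemma lowTau_bddAbove (hw : ‖w‖ = 1) (A : AR w) :
    BddAbove ((fun r => sInf (tau w '' (A.1 ∩ ball w r))) '' Ioi (0:ℝ)) := by
  refine ⟨1, ?_⟩
  rintro x ⟨r, hr, rfl⟩
  exact f_le_one hw A (mem_Ioi.mp hr)

lemma highTau_bddBelow (hw : ‖w‖ = 1) (A : AR w) :
    BddBelow ((fun r => sSup (tau w '' (A.1 ∩ ball w r))) '' Ioi (0:ℝ)) := by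
  refine ⟨0, ?_⟩
  rintro x ⟨r, hr, rfl⟩
  exact g_nonneg hw A r

lemma lowTau_mono (hw : ‖w‖ = 1) (A A' : AR w) {r0 : ℝ} (hr0 : 0 < r0)
    (hsub : A.1 ∩ ball w r0 ⊆ A'.1) : lowTau w A'.1 ≤ lowTau w A.1 := by
  apply Real.sSup_le _ (lowTau_nonneg hw A)
  rintro x ⟨r, hr, rfl⟩
  have hr : 0 < r := mem_Ioi.mp hr
  have hr' : 0 < min r r0 := lt_min hr hr0
  have hAA' : A.1 ∩ ball w (min r r0) ⊆ A'.1 ∩ ball w (min r r0) := fun z hz =>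
    ⟨hsub ⟨hz.1, ball_subset_ball (min_le_right r r0) hz.2⟩, hz.2⟩
  have h1 : sInf (tau w '' (A'.1 ∩ ball w r)) ≤ sInf (tau w '' (A'.1 ∩ ball w (min r r0))) :=
    csInf_le_csInf (S_bddBelow hw A' r) (S_ne A' hr')
      (image_mono (inter_subset_inter_right _ (ball_subset_ball (min_le_left r r0))))
  have h2 : sInf (tau w '' (A'.1 ∩ ball w (min r r0))) ≤ sInf (tau w '' (A.1 ∩ ball w (min r r0))) :=
    csInf_le_csInf (S_bddBelow hw A' (min r r0)) (S_ne A hr') (image_mono hAA')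
  have h3 : sInf (tau w '' (A.1 ∩ ball w (min r r0))) ≤ lowTau w A.1 :=
    le_csSup (lowTau_bddAbove hw A) ⟨min r r0, hr', rfl⟩
  linarith

lemma highTau_mono (hw : ‖w‖ = 1) (A A' : AR w) {r0 : ℝ} (hr0 : 0 < r0)
    (hsub : A.1 ∩ ball w r0 ⊆ A'.1) : highTau w A.1 ≤ highTau w A'.1 := by
  apply le_csInf (nonempty_Ioi.image _)
  rintro x ⟨r, hr, rfl⟩
  have hr : 0 < r := mem_Ioi.mp hr
  have hr' : 0 < min r r0 := lt_min hr hr0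
  have hAA' : A.1 ∩ ball w (min r r0) ⊆ A'.1 ∩ ball w (min r r0) := fun z hz =>
    ⟨hsub ⟨hz.1, ball_subset_ball (min_le_right r r0) hz.2⟩, hz.2⟩
  have h1 : highTau w A.1 ≤ sSup (tau w '' (A.1 ∩ ball w (min r r0))) :=
    csInf_le (highTau_bddBelow hw A) ⟨min r r0, hr', rfl⟩
  have h2 : sSup (tau w '' (A.1 ∩ ball w (min r r0))) ≤ sSup (tau w '' (A'.1 ∩ ball w (min r r0))) :=
    csSup_le_csSup (S_bddAbove hw A' (min r r0)) (S_ne A hr') (image_mono hAA')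
  have h3 : sSup (tau w '' (A'.1 ∩ ball w (min r r0))) ≤ sSup (tau w '' (A'.1 ∩ ball w r)) :=
    csSup_le_csSup (S_bddAbove hw A' r) (S_ne A' hr')
      (image_mono (inter_subset_inter_right _ (ball_subset_ball (min_le_left r r0))))
  linarith

lemma open_upward {U : Set (AR w)}
    (hU : TopologicalSpace.GenerateOpen
      {O | ∃ B : AR w, ∃ r : ℝ, 0 < r ∧ O = {A' : AR w | B.1 ∩ ball w r ⊆ A'.1}} U) :
    ∀ A A' : AR w, A ∈ U → A.1 ⊆ A'.1 → A' ∈ U := by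
  induction hU with
  | basic O hO =>
    obtain ⟨B, r, hr, rfl⟩ := hO
    exact fun A A' hA hAA' => hA.trans hAA'
  | univ => exact fun _ _ _ _ => trivial
  | inter s t _ _ ihs iht => exact fun A A' hA h => ⟨ihs A A' hA.1 h, iht A A' hA.2 h⟩
  | sUnion S _ ih =>
    rintro A A' ⟨s, hs, hA⟩ h
    exact ⟨s, hs, ih s hs A A' hA h⟩

lemma isOpen_rough {S : Set (AR w)}
    (h : ∀ A ∈ S, ∀ A' : AR w, A.1 ∩ ball w 1 ⊆ A'.1 → A' ∈ S) :
    @IsOpen (AR w) (roughTopology w) S := by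
  letI := roughTopology w
  have hS : S = ⋃ A ∈ S, {A' : AR w | A.1 ∩ ball w 1 ⊆ A'.1} := by
    ext A'
    constructor
    · intro hA'
      exact mem_biUnion hA' (fun z hz => hz.1)
    · intro hA'
      simp only [mem_iUnion] at hA'
      obtain ⟨A, hA, hsub⟩ := hA'
      exact h A hA A' hsub
  rw [hS]
  exact isOpen_biUnion fun A _ =>
    TopologicalSpace.isOpen_generateFrom_of_mem ⟨A, 1, one_pos, rfl⟩

/-- the basic sequence of scales -/
def tseq (n : ℕ) : ℝ := ((n : ℝ) + 2)⁻¹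

lemma tseq_pos (n : ℕ) : 0 < tseq n := by
  have : (0:ℝ) < (n : ℝ) + 2 := by positivity
  exact inv_pos.mpr this

lemma tseq_le (n : ℕ) : tseq n ≤ 1/2 := by
  rw [tseq]
  rw [inv_le_comm₀ (by positivity) (by norm_num)]
  have : (0:ℝ) ≤ (n:ℝ) := Nat.cast_nonneg n
  norm_num

lemma tseq_small {δ : ℝ} (hδ : 0 < δ) : ∃ n : ℕ, tseq n < δ := by
  obtain ⟨n, hn⟩ := exists_nat_gt δ⁻¹
  refine ⟨n, ?_⟩
  have h1 : δ⁻¹ < (n:ℝ) + 2 := by linarith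
  have h2 : ((n:ℝ) + 2)⁻¹ < (δ⁻¹)⁻¹ :=
    inv_strictAnti₀ (inv_pos.mpr hδ) h1
  rwa [inv_inv] at h2

/-- tangential point -/
def zt (w : ℂ) (t : ℝ) : ℂ := ((1 - t^2 : ℝ) : ℂ) * w * Complex.exp ((t:ℂ) * Complex.I)

lemma zt_abs (hw : ‖w‖ = 1) {t : ℝ} (ht : 0 < t) (ht2 : t ≤ 1/2) :
    ‖zt w t‖ = 1 - t^2 := by
  have h4 : t^2 ≤ 1/4 := by nlinarith
  rw [zt, norm_mul, norm_mul, Complex.norm_real, Real.norm_eq_abs, hw, Complex.norm_exp_ofReal_mul_I]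
  rw [abs_of_nonneg (by nlinarith)]
  ring

lemma zt_mem (hw : ‖w‖ = 1) {t : ℝ} (ht : 0 < t) (ht2 : t ≤ 1/2) :
    zt w t ∈ unitDisc := by
  have : ‖zt w t‖ = 1 - t^2 := zt_abs hw ht ht2
  show ‖zt w t‖ < 1
  rw [this]; nlinarith

lemma zt_dist_le (hw : ‖w‖ = 1) {t : ℝ} (ht : 0 < t) (ht2 : t ≤ 1/2) :
    ‖w - zt w t‖ ≤ 3 * t := by
  have hkey : w - zt w t = w * (1 - ((1 - t^2 : ℝ) : ℂ) * Complex.exp ((t:ℂ) * Complex.I)) := by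
    rw [zt]; ring
  rw [hkey, norm_mul, hw, one_mul]
  have h1 : (1 : ℂ) - ((1 - t^2 : ℝ) : ℂ) * Complex.exp ((t:ℂ) * Complex.I)
      = (1 - Complex.exp ((t:ℂ) * Complex.I))
        + ((t^2 : ℝ) : ℂ) * Complex.exp ((t:ℂ) * Complex.I) := by
    push_cast; ring
  rw [h1]
  have h2 : ‖1 - Complex.exp ((t:ℂ) * Complex.I)‖ ≤ 2 * t := by
    have habs : ‖(t:ℂ) * Complex.I‖ = t := by
      rw [norm_mul, Complex.norm_I, Complex.norm_real, Real.norm_eq_abs, mul_one, abs_of_pos ht]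
    have := Complex.norm_exp_sub_one_le (x := (t:ℂ) * Complex.I) (by rw [habs]; linarith)
    rw [habs] at this
    calc ‖1 - Complex.exp ((t:ℂ) * Complex.I)‖
        = ‖Complex.exp ((t:ℂ) * Complex.I) - 1‖ := by rw [norm_sub_rev]
      _ ≤ 2 * t := this
  have h3 : ‖((t^2 : ℝ) : ℂ) * Complex.exp ((t:ℂ) * Complex.I)‖ = t^2 := by
    rw [norm_mul, Complex.norm_real, Real.norm_eq_abs, Complex.norm_exp_ofReal_mul_I, mul_one,
      abs_of_pos (by positivity)]
  calc ‖(1 - Complex.exp ((t:ℂ) * Complex.I))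
          + ((t^2 : ℝ) : ℂ) * Complex.exp ((t:ℂ) * Complex.I)‖
      ≤ ‖1 - Complex.exp ((t:ℂ) * Complex.I)‖
        + ‖((t^2 : ℝ) : ℂ) * Complex.exp ((t:ℂ) * Complex.I)‖ := norm_add_le _ _
    _ ≤ 2 * t + t^2 := by rw [h3]; linarith
    _ ≤ 3 * t := by nlinarith

lemma zt_dist_ge (hw : ‖w‖ = 1) {t : ℝ} (ht : 0 < t) (ht2 : t ≤ 1/2) :
    t / 2 ≤ ‖w - zt w t‖ := by
  have hkey : w - zt w t = w * (1 - ((1 - t^2 : ℝ) : ℂ) * Complex.exp ((t:ℂ) * Complex.I)) := by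
    rw [zt]; ring
  rw [hkey, norm_mul, hw, one_mul]
  have him : ((1 : ℂ) - ((1 - t^2 : ℝ) : ℂ) * Complex.exp ((t:ℂ) * Complex.I)).im
      = -((1 - t^2) * Real.sin t) := by
    simp [Complex.sub_im, Complex.mul_im, Complex.exp_ofReal_mul_I_im,
      Complex.exp_ofReal_mul_I_re, ← Complex.ofReal_pow]
  have hsin : t * (15/16) ≤ Real.sin t := by
    have := Real.sin_gt_sub_cube ht
    nlinarith
  have hsin0 : 0 ≤ Real.sin t := by nlinarith
  have h4 : t^2 ≤ 1/4 := by nlinarith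
  calc t / 2 ≤ (1 - t^2) * Real.sin t := by nlinarith
    _ = |((1 : ℂ) - ((1 - t^2 : ℝ) : ℂ) * Complex.exp ((t:ℂ) * Complex.I)).im| := by
        rw [him, abs_neg, abs_of_nonneg (by nlinarith)]
    _ ≤ ‖(1 : ℂ) - ((1 - t^2 : ℝ) : ℂ) * Complex.exp ((t:ℂ) * Complex.I)‖ :=
        Complex.abs_im_le_norm _

lemma zt_tau_le (hw : ‖w‖ = 1) {t : ℝ} (ht : 0 < t) (ht2 : t ≤ 1/2) :
    tau w (zt w t) ≤ 2 * t := by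
  rw [tau, zt_abs hw ht ht2]
  have h1 : 1 - (1 - t^2) = t^2 := by ring
  rw [h1]
  have hge := zt_dist_ge hw ht ht2
  have hpos : 0 < ‖w - zt w t‖ := lt_of_lt_of_le (by positivity) hge
  rw [div_le_iff₀ hpos]
  nlinarith

/-- radial point -/
def zr (w : ℂ) (t : ℝ) : ℂ := ((1 - t : ℝ) : ℂ) * w

lemma zr_mem (hw : ‖w‖ = 1) {t : ℝ} (ht : 0 < t) (ht2 : t ≤ 1/2) :
    zr w t ∈ unitDisc := by
  show ‖zr w t‖ < 1
  rw [zr, norm_mul, Complex.norm_real, Real.norm_eq_abs, hw, mul_one, abs_of_nonneg (by linarith)]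
  linarith

lemma zr_dist (hw : ‖w‖ = 1) {t : ℝ} (ht : 0 < t) :
    ‖w - zr w t‖ = t := by
  have hkey : w - zr w t = w * ((t : ℝ) : ℂ) := by rw [zr]; push_cast; ring
  rw [hkey, norm_mul, hw, one_mul, Complex.norm_real, Real.norm_eq_abs, abs_of_pos ht]

lemma zr_tau (hw : ‖w‖ = 1) {t : ℝ} (ht : 0 < t) (ht2 : t ≤ 1/2) :
    tau w (zr w t) = 1 := by
  rw [tau, zr_dist hw ht]
  rw [zr, norm_mul, Complex.norm_real, Real.norm_eq_abs, hw, mul_one, abs_of_nonneg (by linarith)]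
  field_simp
  ring

/-- enlarge an approach region inside `AR w` -/
def enlarge (A : AR w) (T : Set ℂ) (hT : T ⊆ unitDisc) : AR w :=
  ⟨A.1 ∪ T, union_subset A.2.1 hT, closure_mono subset_union_left A.2.2⟩

def Tset (w : ℂ) : Set ℂ := range fun n : ℕ => zt w (tseq n)

lemma Tset_sub (hw : ‖w‖ = 1) : Tset w ⊆ unitDisc := by
  rintro z ⟨n, rfl⟩
  exact zt_mem hw (tseq_pos n) (tseq_le n)

def Nset (w : ℂ) : Set ℂ := range fun n : ℕ => zr w (tseq n)

lemma Nset_sub (hw : ‖w‖ = 1) : Nset w ⊆ unitDisc := by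
  rintro z ⟨n, rfl⟩
  exact zr_mem hw (tseq_pos n) (tseq_le n)

lemma lowTau_enlargeT (hw : ‖w‖ = 1) (A : AR w) :
    lowTau w (enlarge A (Tset w) (Tset_sub hw)).1 = 0 := by
  set A' := enlarge A (Tset w) (Tset_sub hw) with hA'
  refine le_antisymm ?_ (lowTau_nonneg hw A')
  apply Real.sSup_le _ le_rfl
  rintro x ⟨r, hr, rfl⟩
  have hr : 0 < r := mem_Ioi.mp hr
  by_contra hcon
  push_neg at hcon
  -- hcon : 0 < sInf S
  set c := sInf (tau w '' (A'.1 ∩ ball w r)) with hc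
  obtain ⟨n, hn⟩ := tseq_small (lt_min (by linarith : (0:ℝ) < r/3) (by linarith : (0:ℝ) < c/2))
  set t := tseq n with htdef
  have ht : 0 < t := tseq_pos n
  have ht2 : t ≤ 1/2 := tseq_le n
  have htr : t < r / 3 := lt_of_lt_of_le hn (min_le_left _ _)
  have htc : t < c / 2 := lt_of_lt_of_le hn (min_le_right _ _)
  have hmem : zt w t ∈ A'.1 ∩ ball w r := by
    constructor
    · exact Or.inr ⟨n, rfl⟩
    · rw [mem_ball, Complex.dist_eq, norm_sub_rev]
      calc ‖w - zt w t‖ ≤ 3 * t := zt_dist_le hw ht ht2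
        _ < r := by linarith
  have h1 : c ≤ tau w (zt w t) := csInf_le (S_bddBelow hw A' r) ⟨zt w t, hmem, rfl⟩
  have h2 : tau w (zt w t) ≤ 2 * t := zt_tau_le hw ht ht2
  linarith

lemma highTau_enlargeN (hw : ‖w‖ = 1) (A : AR w) :
    1 ≤ highTau w (enlarge A (Nset w) (Nset_sub hw)).1 := by
  set A' := enlarge A (Nset w) (Nset_sub hw) with hA'
  refine le_csInf ⟨_, mem_image_of_mem _ (mem_Ioi.mpr one_pos)⟩ ?_
  rintro x ⟨r, hr, rfl⟩
  have hr : 0 < r := mem_Ioi.mp hr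
  obtain ⟨n, hn⟩ := tseq_small hr
  set t := tseq n with htdef
  have ht : 0 < t := tseq_pos n
  have ht2 : t ≤ 1/2 := tseq_le n
  have hmem : zr w t ∈ A'.1 ∩ ball w r := by
    constructor
    · exact Or.inr ⟨n, rfl⟩
    · rw [mem_ball, Complex.dist_eq, norm_sub_rev, zr_dist hw ht]
      exact hn
  have : tau w (zr w t) ∈ tau w '' (A'.1 ∩ ball w r) := ⟨zr w t, hmem, rfl⟩
  rw [zr_tau hw ht ht2] at this
  exact le_csSup (S_bddAbove hw A' r) this

end RoughAux

open RoughAux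

theorem stmt16 (w : ℂ) (hw : ‖w‖ = 1) :
    @IsOpen (AR w) (roughTopology w) {A : AR w | VeryOscAt w A.1} ∧
    @IsClosed (AR w) (roughTopology w) {A : AR w | NontangentialAt w A.1} ∧
    @interior (AR w) (roughTopology w) {A : AR w | NontangentialAt w A.1} = ∅ ∧
    @IsClosed (AR w) (roughTopology w) {A : AR w | TangentialAt w A.1} ∧
    @interior (AR w) (roughTopology w) {A : AR w | TangentialAt w A.1} = ∅ := by
  letI : TopologicalSpace (AR w) := roughTopology w
  refine ⟨?_, ?_, ?_, ?_, ?_⟩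
  · -- VeryOsc open
    apply isOpen_rough
    intro A hA A' hsub
    have hlow : lowTau w A'.1 = 0 :=
      le_antisymm (hA.1 ▸ lowTau_mono hw A A' one_pos hsub) (lowTau_nonneg hw A')
    exact ⟨hlow, lt_of_lt_of_le hA.2 (highTau_mono hw A A' one_pos hsub)⟩
  · -- Nontangential closed
    rw [← isOpen_compl_iff]
    apply isOpen_rough
    intro A hA A' hsub
    simp only [mem_compl_iff, mem_setOf_eq, NontangentialAt, not_lt] at hA ⊢
    exact (lowTau_mono hw A A' one_pos hsub).trans hA
  · -- interior of Nontangential empty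
    ext A
    simp only [mem_empty_iff_false, iff_false]
    intro hA
    obtain ⟨U, hUS, hUopen, hAU⟩ := mem_interior.mp hA
    set A' := enlarge A (Tset w) (Tset_sub hw) with hA'
    have hmem : A' ∈ U := open_upward hUopen A A' hAU subset_union_left
    have h2 : NontangentialAt w A'.1 := hUS hmem
    rw [NontangentialAt, lowTau_enlargeT hw A] at h2
    exact lt_irrefl 0 h2
  · -- Tangential closed
    rw [← isOpen_compl_iff]
    apply isOpen_rough
    intro A hA A' hsub
    simp only [mem_compl_iff, mem_setOf_eq, TangentialAt] at hA ⊢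
    intro h0
    have := highTau_mono hw A A' one_pos hsub
    rw [h0] at this
    exact hA (le_antisymm this (highTau_nonneg hw A))
  · -- interior of Tangential empty
    ext A
    simp only [mem_empty_iff_false, iff_false]
    intro hA
    obtain ⟨U, hUS, hUopen, hAU⟩ := mem_interior.mp hA
    set A' := enlarge A (Nset w) (Nset_sub hw) with hA'
    have hmem : A' ∈ U := open_upward hUopen A A' hAU subset_union_left
    have h2 : TangentialAt w A'.1 := hUS hmem
    have := highTau_enlargeN hw A
    rw [TangentialAt] at h2
    rw [← hA', h2] at this
    norm_num at this
end
end
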